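/- arXiv:2305.10007 — 2 statements merged into one kernel-verified Lean document; each statement's English description precedes it below -/
import Mathlib

section
/- Let n ≥ 3 be an integer and κ > n a real number. Then there exists a constant C > 0, depending only on n and κ, such that for every R > 0 and every x ∈ ℝⁿ with x ≠ 0, one has ∫_{{y ∈ ℝⁿ : |y| ≥ R}} |x − y|^{2−n} |y|^{−κ} dy ≤ C (R^{n−κ} + |x|^{n−κ}) |x|^{2−n}. -/
open MeasureTheory Metric Set

namespace RieszAux

lemma pow_rpow_comm {x : ℝ} (hx : 0 ≤ x) (k : ℕ) (q : ℝ) : (x ^ k) ^ q = (x ^ q) ^ k := by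
  rw [← Real.rpow_natCast x k, ← Real.rpow_mul hx, mul_comm, Real.rpow_mul hx, Real.rpow_natCast]

lemma aux_tsum {c ρ : ℝ} (hc : 0 ≤ c) (hρ0 : 0 ≤ ρ) (hρ1 : ρ < 1) :
    ∑' k : ℕ, ENNReal.ofReal (c * ρ ^ k) ≤ ENNReal.ofReal (c * (1 - ρ)⁻¹) := by
  have h : ∀ k : ℕ, ENNReal.ofReal (c * ρ ^ k) = ENNReal.ofReal c * (ENNReal.ofReal ρ) ^ k :=
    fun k => by rw [ENNReal.ofReal_mul hc, ENNReal.ofReal_pow hρ0]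
  rw [tsum_congr h, ENNReal.tsum_mul_left, ENNReal.tsum_geometric, ENNReal.ofReal_mul hc,
    ← ENNReal.ofReal_one, ← ENNReal.ofReal_sub _ hρ0, ENNReal.ofReal_inv_of_pos (by linarith)]

lemma lint_tail (n : ℕ) (hn : 0 < n) (q : ℝ) (hq : q + n < 0) :
    ∃ K : ℝ, 0 < K ∧ ∀ M : ℝ, 0 < M →
      ∫⁻ y in {y : EuclideanSpace ℝ (Fin n) | M ≤ ‖y‖}, ENNReal.ofReal (‖y‖ ^ q) ≤
        ENNReal.ofReal (K * M ^ (q + n)) := by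
  classical
  have hq0 : q ≤ 0 := by have : (0:ℝ) ≤ n := Nat.cast_nonneg n; linarith
  set E := EuclideanSpace ℝ (Fin n)
  have hfr : Module.finrank ℝ E = n := finrank_euclideanSpace_fin
  set b := (volume (ball (0:E) 1)).toReal with hbdef
  have hbpos : 0 < b :=
    ENNReal.toReal_pos (measure_ball_pos _ _ one_pos).ne' measure_ball_lt_top.ne
  have hball : volume (ball (0:E) 1) = ENNReal.ofReal b :=
    (ENNReal.ofReal_toReal measure_ball_lt_top.ne).symm
  set ρ : ℝ := 2 ^ q * 2 ^ (n:ℕ) with hρdef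
  have hρeq : ρ = 2 ^ (q + n) := by
    rw [hρdef, ← Real.rpow_natCast (2:ℝ) n, ← Real.rpow_add two_pos]
  have hρ0 : 0 ≤ ρ := by positivity
  have hρ1 : ρ < 1 := by
    rw [hρeq]; exact Real.rpow_lt_one_of_one_lt_of_neg one_lt_two hq
  refine ⟨b * 2 ^ (n:ℕ) * (1 - ρ)⁻¹, mul_pos (mul_pos hbpos (by positivity)) (inv_pos.mpr (by linarith)), fun M hM => ?_⟩
  -- dyadic annuli
  set A : ℕ → Set E := fun k => {y : E | 2 ^ k * M ≤ ‖y‖} ∩ closedBall 0 (2 ^ (k+1) * M)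
    with hAdef
  have cover : {y : E | M ≤ ‖y‖} ⊆ ⋃ k : ℕ, A k := by
    intro y hy
    simp only [mem_setOf_eq] at hy
    have hex : ∃ k : ℕ, ‖y‖ < 2 ^ (k+1) * M := by
      obtain ⟨j, hj⟩ := pow_unbounded_of_one_lt (‖y‖ / M) (one_lt_two (α := ℝ))
      refine ⟨j, lt_of_lt_of_le ((div_lt_iff₀ hM).mp hj) ?_⟩
      have : (2:ℝ) ^ j ≤ 2 ^ (j+1) := by
        apply pow_le_pow_right₀ one_le_two (Nat.le_succ j)
      nlinarith
    refine Set.mem_iUnion.mpr ⟨Nat.find hex, ⟨?_, ?_⟩⟩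
    · simp only [mem_setOf_eq]
      rcases Nat.eq_zero_or_pos (Nat.find hex) with h0 | hpos
      · rw [h0]; simpa using hy
      · obtain ⟨m, hm⟩ := Nat.exists_eq_succ_of_ne_zero hpos.ne'
        have hmin := Nat.find_min hex (show m < Nat.find hex by omega)
        rw [hm]; exact not_lt.mp hmin
    · rw [mem_closedBall_zero_iff]
      exact (Nat.find_spec hex).le
  have hc0 : 0 ≤ b * 2 ^ (n:ℕ) * (M ^ q * M ^ (n:ℕ)) := by positivity
  calc ∫⁻ y in {y : E | M ≤ ‖y‖}, ENNReal.ofReal (‖y‖ ^ q)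
      ≤ ∫⁻ y in ⋃ k : ℕ, A k, ENNReal.ofReal (‖y‖ ^ q) := lintegral_mono_set cover
    _ ≤ ∑' k : ℕ, ∫⁻ y in A k, ENNReal.ofReal (‖y‖ ^ q) := lintegral_iUnion_le _ _
    _ ≤ ∑' k : ℕ, ENNReal.ofReal ((b * 2 ^ (n:ℕ) * (M ^ q * M ^ (n:ℕ))) * ρ ^ k) := by
        refine ENNReal.tsum_le_tsum fun k => ?_
        have hbase : (0:ℝ) < 2 ^ k * M := by positivity
        have h1 : ∫⁻ y in A k, ENNReal.ofReal (‖y‖ ^ q)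
            ≤ ∫⁻ _ in A k, ENNReal.ofReal ((2 ^ k * M) ^ q) := by
          refine setLIntegral_mono measurable_const fun y hy => ?_
          exact ENNReal.ofReal_le_ofReal
            (Real.rpow_le_rpow_of_nonpos hbase hy.1 hq0)
        refine h1.trans ?_
        rw [setLIntegral_const]
        have h2 : volume (A k) ≤ ENNReal.ofReal ((2 ^ (k+1) * M) ^ (n:ℕ)) * ENNReal.ofReal b := by
          refine (measure_mono (Set.inter_subset_right)).trans ?_
          rw [Measure.addHaar_closedBall _ _ (by positivity), hfr, hball]
        calc ENNReal.ofReal ((2 ^ k * M) ^ q) * volume (A k)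
            ≤ ENNReal.ofReal ((2 ^ k * M) ^ q) *
              (ENNReal.ofReal ((2 ^ (k+1) * M) ^ (n:ℕ)) * ENNReal.ofReal b) := by gcongr
          _ = ENNReal.ofReal ((2 ^ k * M) ^ q * ((2 ^ (k+1) * M) ^ (n:ℕ) * b)) := by
              rw [ENNReal.ofReal_mul (by positivity), ENNReal.ofReal_mul (by positivity)]
          _ = ENNReal.ofReal ((b * 2 ^ (n:ℕ) * (M ^ q * M ^ (n:ℕ))) * ρ ^ k) := by
              congr 1
              rw [Real.mul_rpow (by positivity) hM.le, pow_rpow_comm (by norm_num) k q,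
                hρdef, mul_pow, mul_pow]
              ring
    _ ≤ ENNReal.ofReal ((b * 2 ^ (n:ℕ) * (M ^ q * M ^ (n:ℕ))) * (1 - ρ)⁻¹) :=
        aux_tsum hc0 hρ0 hρ1
    _ = ENNReal.ofReal (b * 2 ^ (n:ℕ) * (1 - ρ)⁻¹ * M ^ (q + n)) := by
        congr 1
        rw [Real.rpow_add hM, Real.rpow_natCast]
        ring

lemma lint_ball (n : ℕ) (hn : 0 < n) (q : ℝ) (hq : 0 < q + n) (hq0 : q < 0) :
    ∃ K : ℝ, 0 < K ∧ ∀ M : ℝ, 0 < M →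
      ∫⁻ z in closedBall (0 : EuclideanSpace ℝ (Fin n)) M, ENNReal.ofReal (‖z‖ ^ q) ≤
        ENNReal.ofReal (K * M ^ (q + n)) := by
  classical
  set E := EuclideanSpace ℝ (Fin n)
  have : Nontrivial E := by
    have : 1 ≤ n := hn
    refine ⟨⟨EuclideanSpace.single ⟨0, by omega⟩ (1:ℝ), 0, fun h => ?_⟩⟩
    have : (1:ℝ) = 0 := by simpa using congrArg (fun f : E => f ⟨0, by omega⟩) h
    exact one_ne_zero this
  have hfr : Module.finrank ℝ E = n := finrank_euclideanSpace_fin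
  set b := (volume (ball (0:E) 1)).toReal with hbdef
  have hbpos : 0 < b :=
    ENNReal.toReal_pos (measure_ball_pos _ _ one_pos).ne' measure_ball_lt_top.ne
  have hball : volume (ball (0:E) 1) = ENNReal.ofReal b :=
    (ENNReal.ofReal_toReal measure_ball_lt_top.ne).symm
  have h2inv : (0:ℝ) < 2⁻¹ := by norm_num
  set ρ : ℝ := (2⁻¹) ^ q * (2⁻¹ : ℝ) ^ (n:ℕ) with hρdef
  have hρeq : ρ = (2⁻¹ : ℝ) ^ (q + n) := by
    rw [hρdef, ← Real.rpow_natCast (2⁻¹:ℝ) n, ← Real.rpow_add h2inv]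
  have hρ0 : 0 ≤ ρ := by positivity
  have hρ1 : ρ < 1 := by
    rw [hρeq]; exact Real.rpow_lt_one (by norm_num) (by norm_num) hq
  refine ⟨b * (2⁻¹) ^ q * (1 - ρ)⁻¹, mul_pos (mul_pos hbpos (by positivity)) (inv_pos.mpr (by linarith)), fun M hM => ?_⟩
  set A : ℕ → Set E := fun k =>
    {z : E | M * (2⁻¹) ^ (k+1) ≤ ‖z‖} ∩ closedBall 0 (M * (2⁻¹) ^ k) with hAdef
  have cover : closedBall (0:E) M ⊆ {(0:E)} ∪ ⋃ k : ℕ, A k := by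
    intro z hz
    rw [mem_closedBall_zero_iff] at hz
    rcases eq_or_ne z 0 with rfl | hz0
    · exact Or.inl rfl
    have hzpos : 0 < ‖z‖ := norm_pos_iff.mpr hz0
    have hex : ∃ k : ℕ, M * (2⁻¹) ^ (k+1) ≤ ‖z‖ := by
      obtain ⟨j, hj⟩ := pow_unbounded_of_one_lt (M / ‖z‖) (one_lt_two (α := ℝ))
      refine ⟨j, ?_⟩
      rw [div_lt_iff₀ hzpos] at hj
      have h1 : M * (2⁻¹ : ℝ) ^ (j+1) ≤ M * (2⁻¹) ^ j := by
        have : ((2:ℝ)⁻¹) ^ (j+1) ≤ (2⁻¹) ^ j :=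
          pow_le_pow_of_le_one (by norm_num) (by norm_num) (Nat.le_succ j)
        nlinarith
      refine h1.trans ?_
      rw [inv_pow, ← div_eq_mul_inv, div_le_iff₀ (by positivity)]
      nlinarith
    refine Or.inr (Set.mem_iUnion.mpr ⟨Nat.find hex, ⟨Nat.find_spec hex, ?_⟩⟩)
    rw [mem_closedBall_zero_iff]
    rcases Nat.eq_zero_or_pos (Nat.find hex) with h0 | hpos
    · rw [h0]; simpa using hz
    · obtain ⟨m, hm⟩ := Nat.exists_eq_succ_of_ne_zero hpos.ne'
      have hmin := Nat.find_min hex (show m < Nat.find hex by omega)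
      rw [hm]; exact (not_le.mp hmin).le
  have hc0 : 0 ≤ b * (2⁻¹:ℝ) ^ q * (M ^ q * M ^ (n:ℕ)) := by positivity
  calc ∫⁻ z in closedBall (0:E) M, ENNReal.ofReal (‖z‖ ^ q)
      ≤ ∫⁻ z in {(0:E)} ∪ ⋃ k : ℕ, A k, ENNReal.ofReal (‖z‖ ^ q) := lintegral_mono_set cover
    _ ≤ (∫⁻ z in {(0:E)}, ENNReal.ofReal (‖z‖ ^ q)) +
        ∫⁻ z in ⋃ k : ℕ, A k, ENNReal.ofReal (‖z‖ ^ q) := lintegral_union_le _ _ _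
    _ ≤ 0 + ∑' k : ℕ, ∫⁻ z in A k, ENNReal.ofReal (‖z‖ ^ q) := by
        gcongr
        · exact le_of_eq (setLIntegral_measure_zero _ _ (measure_singleton 0))
        · exact lintegral_iUnion_le _ _
    _ = ∑' k : ℕ, ∫⁻ z in A k, ENNReal.ofReal (‖z‖ ^ q) := zero_add _
    _ ≤ ∑' k : ℕ, ENNReal.ofReal ((b * (2⁻¹) ^ q * (M ^ q * M ^ (n:ℕ))) * ρ ^ k) := by
        refine ENNReal.tsum_le_tsum fun k => ?_
        have hbase : (0:ℝ) < M * (2⁻¹) ^ (k+1) := by positivity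
        have h1 : ∫⁻ z in A k, ENNReal.ofReal (‖z‖ ^ q)
            ≤ ∫⁻ _ in A k, ENNReal.ofReal ((M * (2⁻¹) ^ (k+1)) ^ q) := by
          refine setLIntegral_mono measurable_const fun z hz => ?_
          exact ENNReal.ofReal_le_ofReal
            (Real.rpow_le_rpow_of_nonpos hbase hz.1 hq0.le)
        refine h1.trans ?_
        rw [setLIntegral_const]
        have h2 : volume (A k) ≤ ENNReal.ofReal ((M * (2⁻¹) ^ k) ^ (n:ℕ)) * ENNReal.ofReal b := by
          refine (measure_mono (Set.inter_subset_right)).trans ?_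
          rw [Measure.addHaar_closedBall _ _ (by positivity), hfr, hball]
        calc ENNReal.ofReal ((M * (2⁻¹) ^ (k+1)) ^ q) * volume (A k)
            ≤ ENNReal.ofReal ((M * (2⁻¹) ^ (k+1)) ^ q) *
              (ENNReal.ofReal ((M * (2⁻¹) ^ k) ^ (n:ℕ)) * ENNReal.ofReal b) := by gcongr
          _ = ENNReal.ofReal ((M * (2⁻¹) ^ (k+1)) ^ q * ((M * (2⁻¹) ^ k) ^ (n:ℕ) * b)) := by
              rw [ENNReal.ofReal_mul (by positivity), ENNReal.ofReal_mul (by positivity)]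
          _ = ENNReal.ofReal ((b * (2⁻¹) ^ q * (M ^ q * M ^ (n:ℕ))) * ρ ^ k) := by
              congr 1
              rw [Real.mul_rpow hM.le (by positivity), pow_rpow_comm (by norm_num) (k+1) q,
                hρdef, mul_pow, mul_pow]
              ring
    _ ≤ ENNReal.ofReal ((b * (2⁻¹) ^ q * (M ^ q * M ^ (n:ℕ))) * (1 - ρ)⁻¹) :=
        aux_tsum hc0 hρ0 hρ1
    _ = ENNReal.ofReal (b * (2⁻¹) ^ q * (1 - ρ)⁻¹ * M ^ (q + n)) := by
        congr 1
        rw [Real.rpow_add hM, Real.rpow_natCast]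
        ring

end RieszAux

/-- Let `n ≥ 3` and `κ > n`. There exists `C > 0`, depending only on `n` and `κ`, such that
for every `R > 0` and every `x ∈ ℝⁿ`, `x ≠ 0`, one has
`∫_{|y| ≥ R} |x − y|^{2−n} |y|^{−κ} dy ≤ C (R^{n−κ} + |x|^{n−κ}) |x|^{2−n}`. -/
theorem integral_riesz_kernel_estimate (n : ℕ) (hn : 3 ≤ n) (κ : ℝ) (hκ : (n : ℝ) < κ) :
    ∃ C > 0, ∀ R > 0, ∀ x : EuclideanSpace ℝ (Fin n), x ≠ 0 →
      (∫ y in {y : EuclideanSpace ℝ (Fin n) | R ≤ ‖y‖},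
          ‖x - y‖ ^ ((2 : ℝ) - n) * ‖y‖ ^ (-κ))
        ≤ C * ((R ^ ((n : ℝ) - κ) + ‖x‖ ^ ((n : ℝ) - κ)) * ‖x‖ ^ ((2 : ℝ) - n)) := by
  classical
  have hn3 : (3:ℝ) ≤ (n:ℝ) := by exact_mod_cast hn
  have hn0 : 0 < n := by omega
  obtain ⟨K₁, hK₁, hI₁⟩ := RieszAux.lint_tail n hn0 (-κ) (by linarith)
  obtain ⟨K₂, hK₂, hI₂⟩ := RieszAux.lint_ball n hn0 ((2:ℝ) - n) (by linarith) (by linarith)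
  obtain ⟨K₃, hK₃, hI₃⟩ := RieszAux.lint_tail n hn0 ((2:ℝ) - n - κ) (by linarith)
  set c₁ : ℝ := 2^((n:ℝ)-2)*K₁ with hc₁def
  set c₂ : ℝ := 2^(κ-2)*K₂ with hc₂def
  set c₃ : ℝ := 3^((n:ℝ)-2)*2^(κ-2)*K₃ with hc₃def
  have hc₁ : 0 < c₁ := mul_pos (Real.rpow_pos_of_pos two_pos _) hK₁
  have hc₂ : 0 < c₂ := mul_pos (Real.rpow_pos_of_pos two_pos _) hK₂
  have hc₃ : 0 < c₃ := mul_pos (mul_pos (Real.rpow_pos_of_pos three_pos _)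
    (Real.rpow_pos_of_pos two_pos _)) hK₃
  refine ⟨c₁ + c₂ + c₃, by positivity, fun R hR x hx => ?_⟩
  have hu : 0 < ‖x‖ := norm_pos_iff.mpr hx
  have hu2 : 0 < ‖x‖/2 := by positivity
  set f : EuclideanSpace ℝ (Fin n) → ℝ := fun y => ‖x - y‖ ^ ((2:ℝ) - n) * ‖y‖ ^ (-κ) with hfdef
  have hfm : Measurable f := by fun_prop
  have hf0 : ∀ y, 0 ≤ f y := fun y =>
    mul_nonneg (Real.rpow_nonneg (norm_nonneg _) _) (Real.rpow_nonneg (norm_nonneg _) _)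
  rw [MeasureTheory.integral_eq_lintegral_of_nonneg_ae (ae_of_all _ hf0)
    hfm.aestronglyMeasurable]
  have hrhs0 : 0 ≤ (c₁ + c₂ + c₃) *
      ((R ^ ((n:ℝ) - κ) + ‖x‖ ^ ((n:ℝ) - κ)) * ‖x‖ ^ ((2:ℝ) - n)) := by positivity
  refine ENNReal.toReal_le_of_le_ofReal hrhs0 ?_
  set A := {y : EuclideanSpace ℝ (Fin n) | R ≤ ‖y‖ ∧ ‖y‖ ≤ ‖x‖/2} with hAdef
  set B := {y : EuclideanSpace ℝ (Fin n) | ‖x‖/2 ≤ ‖y‖ ∧ ‖x - y‖ ≤ ‖x‖/2} with hBdef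
  set Cs := {y : EuclideanSpace ℝ (Fin n) | ‖x‖/2 ≤ ‖y‖ ∧ ‖x‖/2 ≤ ‖x - y‖} with hCsdef
  have hcover : {y : EuclideanSpace ℝ (Fin n) | R ≤ ‖y‖} ⊆ A ∪ (B ∪ Cs) := by
    intro y hy
    simp only [hAdef, hBdef, hCsdef, Set.mem_union, Set.mem_setOf_eq] at *
    by_cases h1 : ‖y‖ ≤ ‖x‖/2
    · exact Or.inl ⟨hy, h1⟩
    · by_cases h2 : ‖x - y‖ ≤ ‖x‖/2
      · exact Or.inr (Or.inl ⟨(le_of_not_ge h1), h2⟩)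
      · exact Or.inr (Or.inr ⟨(le_of_not_ge h1), (le_of_not_ge h2)⟩)
  have split : ∫⁻ y in {y : EuclideanSpace ℝ (Fin n) | R ≤ ‖y‖}, ENNReal.ofReal (f y) ≤
      (∫⁻ y in A, ENNReal.ofReal (f y)) +
      ((∫⁻ y in B, ENNReal.ofReal (f y)) + ∫⁻ y in Cs, ENNReal.ofReal (f y)) := by
    refine (lintegral_mono_set hcover).trans ?_
    refine (lintegral_union_le _ _ _).trans ?_
    gcongr
    exact lintegral_union_le _ _ _
  -- Region A
  have hA : ∫⁻ y in A, ENNReal.ofReal (f y) ≤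
      ENNReal.ofReal ((‖x‖/2)^((2:ℝ)-n) * (K₁ * R ^ (-κ + n))) := by
    have hpt : ∀ y ∈ A, ENNReal.ofReal (f y) ≤
        ENNReal.ofReal ((‖x‖/2)^((2:ℝ)-n) * ‖y‖^(-κ)) := by
      intro y hy
      refine ENNReal.ofReal_le_ofReal
        (mul_le_mul_of_nonneg_right ?_ (Real.rpow_nonneg (norm_nonneg _) _))
      refine Real.rpow_le_rpow_of_nonpos hu2 ?_ (by linarith)
      have h1 : ‖x‖ - ‖y‖ ≤ ‖x - y‖ := norm_sub_norm_le x y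
      have h2 : ‖y‖ ≤ ‖x‖/2 := hy.2
      linarith
    calc ∫⁻ y in A, ENNReal.ofReal (f y)
        ≤ ∫⁻ y in A, ENNReal.ofReal ((‖x‖/2)^((2:ℝ)-n) * ‖y‖^(-κ)) :=
          setLIntegral_mono (by fun_prop) hpt
      _ = ENNReal.ofReal ((‖x‖/2)^((2:ℝ)-n)) * ∫⁻ y in A, ENNReal.ofReal (‖y‖^(-κ)) := by
          simp_rw [ENNReal.ofReal_mul (Real.rpow_pos_of_pos hu2 _).le]
          exact lintegral_const_mul' _ _ ENNReal.ofReal_ne_top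
      _ ≤ ENNReal.ofReal ((‖x‖/2)^((2:ℝ)-n)) * ENNReal.ofReal (K₁ * R ^ (-κ + n)) := by
          gcongr
          refine (lintegral_mono_set ?_).trans (hI₁ R hR)
          exact fun y hy => hy.1
      _ = ENNReal.ofReal ((‖x‖/2)^((2:ℝ)-n) * (K₁ * R ^ (-κ + n))) :=
          (ENNReal.ofReal_mul (Real.rpow_pos_of_pos hu2 _).le).symm
  -- Region B
  have hB : ∫⁻ y in B, ENNReal.ofReal (f y) ≤
      ENNReal.ofReal ((‖x‖/2)^(-κ) * (K₂ * (‖x‖/2) ^ (((2:ℝ)-n) + n))) := by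
    have hpt : ∀ y ∈ B, ENNReal.ofReal (f y) ≤
        ENNReal.ofReal ((‖x‖/2)^(-κ) * ‖x - y‖^((2:ℝ)-n)) := by
      intro y hy
      refine ENNReal.ofReal_le_ofReal ?_
      calc f y ≤ ‖x - y‖^((2:ℝ)-n) * (‖x‖/2)^(-κ) :=
            mul_le_mul_of_nonneg_left
              (Real.rpow_le_rpow_of_nonpos hu2 hy.1 (by linarith))
              (Real.rpow_nonneg (norm_nonneg _) _)
        _ = (‖x‖/2)^(-κ) * ‖x - y‖^((2:ℝ)-n) := mul_comm _ _
    calc ∫⁻ y in B, ENNReal.ofReal (f y)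
        ≤ ∫⁻ y in B, ENNReal.ofReal ((‖x‖/2)^(-κ) * ‖x - y‖^((2:ℝ)-n)) :=
          setLIntegral_mono (by fun_prop) hpt
      _ = ENNReal.ofReal ((‖x‖/2)^(-κ)) * ∫⁻ y in B, ENNReal.ofReal (‖x - y‖^((2:ℝ)-n)) := by
          simp_rw [ENNReal.ofReal_mul (Real.rpow_pos_of_pos hu2 _).le]
          exact lintegral_const_mul' _ _ ENNReal.ofReal_ne_top
      _ ≤ ENNReal.ofReal ((‖x‖/2)^(-κ)) *
          ENNReal.ofReal (K₂ * (‖x‖/2) ^ (((2:ℝ)-n) + n)) := by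
          gcongr
          have hsub : B ⊆ (fun y => x - y) ⁻¹' (closedBall (0:EuclideanSpace ℝ (Fin n)) (‖x‖/2)) := by
            intro y hy
            simp only [Set.mem_preimage, mem_closedBall_zero_iff]
            exact hy.2
          refine (lintegral_mono_set hsub).trans ?_
          have hcv := (Measure.measurePreserving_sub_left
              (volume : Measure (EuclideanSpace ℝ (Fin n))) x).setLIntegral_comp_preimage_emb
            (MeasurableEquiv.subLeft x).measurableEmbedding
            (fun z => ENNReal.ofReal (‖z‖ ^ ((2:ℝ)-n)))
            (closedBall (0:EuclideanSpace ℝ (Fin n)) (‖x‖/2))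
          rw [hcv]
          exact hI₂ _ hu2
      _ = ENNReal.ofReal ((‖x‖/2)^(-κ) * (K₂ * (‖x‖/2) ^ (((2:ℝ)-n) + n))) :=
          (ENNReal.ofReal_mul (Real.rpow_pos_of_pos hu2 _).le).symm
  -- Region Cs
  have hCs : ∫⁻ y in Cs, ENNReal.ofReal (f y) ≤
      ENNReal.ofReal ((3:ℝ)^((n:ℝ)-2) * (K₃ * (‖x‖/2) ^ (((2:ℝ)-n-κ) + n))) := by
    have hpt : ∀ y ∈ Cs, ENNReal.ofReal (f y) ≤
        ENNReal.ofReal ((3:ℝ)^((n:ℝ)-2) * ‖y‖^((2:ℝ)-n-κ)) := by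
      intro y hy
      have hy0 : 0 < ‖y‖ := lt_of_lt_of_le hu2 hy.1
      refine ENNReal.ofReal_le_ofReal ?_
      have h3 : ‖y‖/3 ≤ ‖x - y‖ := by
        have h1 : ‖y‖ ≤ ‖x‖ + ‖x - y‖ := by
          calc ‖y‖ = ‖x - (x - y)‖ := by congr 1; abel
            _ ≤ ‖x‖ + ‖x - y‖ := norm_sub_le _ _
        have h2 : ‖x‖/2 ≤ ‖x - y‖ := hy.2
        linarith
      have hstep : ‖x - y‖ ^ ((2:ℝ)-n) ≤ (‖y‖/3) ^ ((2:ℝ)-n) :=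
        Real.rpow_le_rpow_of_nonpos (by positivity) h3 (by linarith)
      have hdiv : (‖y‖/3) ^ ((2:ℝ)-n) = 3^((n:ℝ)-2) * ‖y‖^((2:ℝ)-n) := by
        rw [Real.div_rpow (norm_nonneg _) (by norm_num : (0:ℝ) ≤ 3), div_eq_mul_inv,
          ← Real.rpow_neg (by norm_num : (0:ℝ) ≤ 3),
          show -((2:ℝ)-n) = (n:ℝ)-2 by ring]
        ring
      calc f y ≤ (‖y‖/3) ^ ((2:ℝ)-n) * ‖y‖^(-κ) :=
            mul_le_mul_of_nonneg_right hstep (Real.rpow_nonneg (norm_nonneg _) _)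
        _ = 3^((n:ℝ)-2) * (‖y‖^((2:ℝ)-n) * ‖y‖^(-κ)) := by rw [hdiv]; ring
        _ = 3^((n:ℝ)-2) * ‖y‖^((2:ℝ)-n-κ) := by
            rw [← Real.rpow_add hy0, show ((2:ℝ)-n) + -κ = (2:ℝ)-n-κ by ring]
    calc ∫⁻ y in Cs, ENNReal.ofReal (f y)
        ≤ ∫⁻ y in Cs, ENNReal.ofReal ((3:ℝ)^((n:ℝ)-2) * ‖y‖^((2:ℝ)-n-κ)) :=
          setLIntegral_mono (by fun_prop) hpt
      _ = ENNReal.ofReal ((3:ℝ)^((n:ℝ)-2)) *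
          ∫⁻ y in Cs, ENNReal.ofReal (‖y‖^((2:ℝ)-n-κ)) := by
          simp_rw [ENNReal.ofReal_mul (Real.rpow_pos_of_pos three_pos _).le]
          exact lintegral_const_mul' _ _ ENNReal.ofReal_ne_top
      _ ≤ ENNReal.ofReal ((3:ℝ)^((n:ℝ)-2)) *
          ENNReal.ofReal (K₃ * (‖x‖/2) ^ (((2:ℝ)-n-κ) + n)) := by
          gcongr
          refine (lintegral_mono_set ?_).trans (hI₃ _ hu2)
          exact fun y hy => hy.1
      _ = ENNReal.ofReal ((3:ℝ)^((n:ℝ)-2) * (K₃ * (‖x‖/2) ^ (((2:ℝ)-n-κ) + n))) :=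
          (ENNReal.ofReal_mul (Real.rpow_pos_of_pos three_pos _).le).symm
  refine (split.trans (add_le_add hA (add_le_add hB hCs))).trans ?_
  rw [← ENNReal.ofReal_add (by positivity) (by positivity),
    ← ENNReal.ofReal_add (by positivity) (by positivity)]
  refine ENNReal.ofReal_le_ofReal ?_
  -- now a real inequality
  have hd2 : ∀ a : ℝ, (‖x‖/2) ^ a = ‖x‖^a * 2^(-a) := by
    intro a
    rw [Real.div_rpow (norm_nonneg x) (by norm_num : (0:ℝ) ≤ 2), div_eq_mul_inv,
      ← Real.rpow_neg (by norm_num : (0:ℝ) ≤ 2)]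
  have eq₁ : (‖x‖/2)^((2:ℝ)-n) * (K₁ * R ^ (-κ + n)) =
      c₁ * (R^((n:ℝ)-κ) * ‖x‖^((2:ℝ)-n)) := by
    rw [hd2, show -((2:ℝ)-n) = (n:ℝ)-2 by ring, show -κ + (n:ℝ) = (n:ℝ)-κ by ring, hc₁def]
    ring
  have eq₂ : (‖x‖/2)^(-κ) * (K₂ * (‖x‖/2) ^ (((2:ℝ)-n) + n)) =
      c₂ * (‖x‖^((n:ℝ)-κ) * ‖x‖^((2:ℝ)-n)) := by
    rw [show ((2:ℝ)-n) + n = (2:ℝ) by ring, hd2, hd2, neg_neg,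
      show ‖x‖^((n:ℝ)-κ) * ‖x‖^((2:ℝ)-n) = ‖x‖^(-κ) * ‖x‖^(2:ℝ) from by
        rw [← Real.rpow_add hu, ← Real.rpow_add hu]; congr 1 <;> ring,
      hc₂def, show (2:ℝ)^(κ-2) = 2^κ * 2^(-2:ℝ) from by
        rw [← Real.rpow_add two_pos]; congr 1 <;> ring]
    ring
  have eq₃ : (3:ℝ)^((n:ℝ)-2) * (K₃ * (‖x‖/2) ^ (((2:ℝ)-n-κ) + n)) =
      c₃ * (‖x‖^((n:ℝ)-κ) * ‖x‖^((2:ℝ)-n)) := by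
    rw [show ((2:ℝ)-n-κ) + n = (2:ℝ)-κ by ring, hd2, show -((2:ℝ)-κ) = κ-2 by ring,
      show ‖x‖^((n:ℝ)-κ) * ‖x‖^((2:ℝ)-n) = ‖x‖^((2:ℝ)-κ) from by
        rw [← Real.rpow_add hu]; congr 1 <;> ring,
      hc₃def]
    ring
  rw [eq₁, eq₂, eq₃]
  have hP : 0 ≤ R^((n:ℝ)-κ) := Real.rpow_nonneg hR.le _
  have hQ1 : 0 ≤ ‖x‖^((n:ℝ)-κ) := Real.rpow_nonneg (norm_nonneg _) _
  have hQ2 : 0 ≤ ‖x‖^((2:ℝ)-n) := Real.rpow_nonneg (norm_nonneg _) _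
  nlinarith [mul_nonneg hc₁.le (mul_nonneg hQ1 hQ2),
    mul_nonneg hc₂.le (mul_nonneg hP hQ2),
    mul_nonneg hc₃.le (mul_nonneg hP hQ2)]
end

section
/- Let n ≥ 3, R > 0, δ < 0, let E be a finite-dimensional real normed vector space, and let ω : {x ∈ ℝⁿ : |x| > R} → E be a smooth map that is componentwise harmonic (i.e. ∑_{i=1}^n ∂²ω/∂x_i² = 0) and satisfies ω = 𝒪_∞(r^δ). Then ω = 𝒪_∞(r^{2−n}). -/
open EuclideanSpace Metric Real Filter Topology

namespace HarmAux

variable {n : ℕ} {F : Type*} [NormedAddCommGroup F] [NormedSpace ℝ F]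
 {G : Type*} [NormedAddCommGroup G] [NormedSpace ℝ G]

local notation "EE" => EuclideanSpace ℝ (Fin n)

noncomputable def dd (v : EuclideanSpace ℝ (Fin n)) (f : EuclideanSpace ℝ (Fin n) → F) :
    EuclideanSpace ℝ (Fin n) → F := fun x => fderiv ℝ f x v

noncomputable def sgl (i : Fin n) : EuclideanSpace ℝ (Fin n) := EuclideanSpace.single i 1

noncomputable def lapF (f : EuclideanSpace ℝ (Fin n) → F) (x : EuclideanSpace ℝ (Fin n)) : F :=
  ∑ i : Fin n, dd (sgl i) (dd (sgl i) f) x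

lemma diffAt {f : EE → F} {U : Set EE} (hU : IsOpen U) (hf : ContDiffOn ℝ (⊤ : ℕ∞) f U)
    {x : EE} (hx : x ∈ U) : DifferentiableAt ℝ f x :=
  (hf.contDiffAt (hU.mem_nhds hx)).differentiableAt (by simp)

lemma smooth_fderiv {f : EE → F} {U : Set EE} (hU : IsOpen U)
    (hf : ContDiffOn ℝ (⊤ : ℕ∞) f U) : ContDiffOn ℝ (⊤ : ℕ∞) (fderiv ℝ f) U := by
  have h1 : ContDiffOn ℝ (⊤ : ℕ∞) (fderivWithin ℝ f U) U :=
    hf.fderivWithin hU.uniqueDiffOn (by exact_mod_cast le_top)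
  exact h1.congr (fun x hx => (fderivWithin_of_isOpen hU hx).symm)

lemma smooth_dd {f : EE → F} {U : Set EE} (hU : IsOpen U)
    (hf : ContDiffOn ℝ (⊤ : ℕ∞) f U) (v : EE) : ContDiffOn ℝ (⊤ : ℕ∞) (dd v f) U := by
  have h2 : ContDiffOn ℝ (⊤ : ℕ∞) (fun x => fderiv ℝ f x v) U :=
    (smooth_fderiv hU hf).clm_apply contDiffOn_const
  exact h2

lemma dd_congr {f g : EE → F} {x : EE} (h : f =ᶠ[𝓝 x] g) (v : EE) :
    dd v f x = dd v g x := by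
  simp only [dd, h.fderiv_eq]

lemma dd_congrOn {f g : EE → F} {U : Set EE} (hU : IsOpen U) {x : EE} (hx : x ∈ U)
    (h : ∀ y ∈ U, f y = g y) (v : EE) : dd v f x = dd v g x :=
  dd_congr (by filter_upwards [hU.mem_nhds hx] with y hy using h y hy) v

lemma dd_add {f g : EE → F} {x : EE} (hf : DifferentiableAt ℝ f x)
    (hg : DifferentiableAt ℝ g x) (v : EE) :
    dd v (fun y => f y + g y) x = dd v f x + dd v g x := by
  simp only [dd, fderiv_fun_add hf hg]; rfl

lemma dd_const_mul {g : EE → ℝ} {x : EE} (c : ℝ) (hg : DifferentiableAt ℝ g x) (v : EE) :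
    dd v (fun y => c * g y) x = c * dd v g x := by
  simp only [dd, fderiv_const_mul hg c]; rfl

lemma dd_mul {f g : EE → ℝ} {x : EE} (hf : DifferentiableAt ℝ f x)
    (hg : DifferentiableAt ℝ g x) (v : EE) :
    dd v (fun y => f y * g y) x = f x * dd v g x + g x * dd v f x := by
  simp only [dd, fderiv_fun_mul hf hg]
  simp [ContinuousLinearMap.add_apply, ContinuousLinearMap.smul_apply, smul_eq_mul]

lemma dd_sum {ι : Type*} {s : Finset ι} {f : ι → EE → F} {x : EE}
    (hf : ∀ k ∈ s, DifferentiableAt ℝ (f k) x) (v : EE) :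
    dd v (fun y => ∑ k ∈ s, f k y) x = ∑ k ∈ s, dd v (f k) x := by
  simp only [dd, fderiv_fun_sum hf]; simp

lemma dd_clm (T : F →L[ℝ] G) {f : EE → F} {x : EE} (hf : DifferentiableAt ℝ f x) (v : EE) :
    dd v (fun y => T (f y)) x = T (dd v f x) := by
  have : fderiv ℝ (fun y => T (f y)) x = T.comp (fderiv ℝ f x) :=
    (T.hasFDerivAt.comp x hf.hasFDerivAt).fderiv
  simp only [dd, this]; rfl

lemma dd_clm_apply {h : EE → (EE →L[ℝ] F)} {x : EE} (hh : DifferentiableAt ℝ h x)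
    (u v : EE) : dd v (fun y => h y u) x = (dd v h x) u := by
  have := fderiv_clm_apply (𝕜 := ℝ) hh (differentiableAt_const u)
  simp only [dd, this]
  simp

lemma dd_comm {f : EE → F} {U : Set EE} (hU : IsOpen U) (hf : ContDiffOn ℝ (⊤ : ℕ∞) f U)
    {x : EE} (hx : x ∈ U) (v w : EE) :
    dd v (dd w f) x = dd w (dd v f) x := by
  have hf' : DifferentiableAt ℝ (fderiv ℝ f) x := by
    have h1 : ContDiffAt ℝ (⊤ : ℕ∞) f x := hf.contDiffAt (hU.mem_nhds hx)
    have h2 : ContDiffAt ℝ (⊤ : ℕ∞) (fderiv ℝ f) x := h1.fderiv_right (by exact_mod_cast le_top)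
    exact h2.differentiableAt (by simp)
  have hev : ∀ᶠ y in 𝓝 x, HasFDerivAt f (fderiv ℝ f y) y := by
    filter_upwards [hU.mem_nhds hx] with y hy
    exact (diffAt hU hf hy).hasFDerivAt
  have hsymm := second_derivative_symmetric_of_eventually hev hf'.hasFDerivAt v w
  have e1 : dd v (dd w f) x = (fderiv ℝ (fderiv ℝ f) x v) w := by
    have h : dd w f = fun y => (fderiv ℝ f y) w := rfl
    rw [h, dd_clm_apply hf']
    rfl
  have e2 : dd w (dd v f) x = (fderiv ℝ (fderiv ℝ f) x w) v := by
    have h : dd v f = fun y => (fderiv ℝ f y) v := rfl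
    rw [h, dd_clm_apply hf']
    rfl
  rw [e1, e2, hsymm]

-- Laplacian lemmas
lemma lapF_add {f g : EE → F} {U : Set EE} (hU : IsOpen U)
    (hf : ContDiffOn ℝ (⊤ : ℕ∞) f U) (hg : ContDiffOn ℝ (⊤ : ℕ∞) g U) {x : EE} (hx : x ∈ U) :
    lapF (fun y => f y + g y) x = lapF f x + lapF g x := by
  unfold lapF
  rw [← Finset.sum_add_distrib]
  refine Finset.sum_congr rfl (fun i _ => ?_)
  have h1 : dd (sgl i) (dd (sgl i) (fun y => f y + g y)) x
      = dd (sgl i) (fun y => dd (sgl i) f y + dd (sgl i) g y) x :=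
    dd_congrOn hU hx (fun y hy => dd_add (diffAt hU hf hy) (diffAt hU hg hy) _) _
  rw [h1, dd_add (diffAt hU (smooth_dd hU hf _) hx) (diffAt hU (smooth_dd hU hg _) hx)]

lemma lapF_clm (T : F →L[ℝ] G) {f : EE → F} {U : Set EE} (hU : IsOpen U)
    (hf : ContDiffOn ℝ (⊤ : ℕ∞) f U) {x : EE} (hx : x ∈ U) :
    lapF (fun y => T (f y)) x = T (lapF f x) := by
  unfold lapF
  rw [map_sum]
  refine Finset.sum_congr rfl (fun i _ => ?_)
  have h1 : dd (sgl i) (dd (sgl i) (fun y => T (f y))) x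
      = dd (sgl i) (fun y => T (dd (sgl i) f y)) x :=
    dd_congrOn hU hx (fun y hy => dd_clm T (diffAt hU hf hy) _) _
  rw [h1, dd_clm T (diffAt hU (smooth_dd hU hf _) hx)]

lemma lapF_sum {ι : Type*} {s : Finset ι} {f : ι → EE → F} {U : Set EE} (hU : IsOpen U)
    (hf : ∀ k ∈ s, ContDiffOn ℝ (⊤ : ℕ∞) (f k) U) {x : EE} (hx : x ∈ U) :
    lapF (fun y => ∑ k ∈ s, f k y) x = ∑ k ∈ s, lapF (f k) x := by
  unfold lapF
  rw [Finset.sum_comm]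
  refine Finset.sum_congr rfl (fun i _ => ?_)
  have h1 : dd (sgl i) (dd (sgl i) (fun y => ∑ k ∈ s, f k y)) x
      = dd (sgl i) (fun y => ∑ k ∈ s, dd (sgl i) (f k) y) x :=
    dd_congrOn hU hx (fun y hy => dd_sum (fun k hk => diffAt hU (hf k hk) hy) _) _
  rw [h1, dd_sum (fun k hk => diffAt hU (smooth_dd hU (hf k hk) _) hx)]

lemma lapF_mul {f g : EE → ℝ} {U : Set EE} (hU : IsOpen U)
    (hf : ContDiffOn ℝ (⊤ : ℕ∞) f U) (hg : ContDiffOn ℝ (⊤ : ℕ∞) g U) {x : EE} (hx : x ∈ U) :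
    lapF (fun y => f y * g y) x = f x * lapF g x
      + 2 * ∑ i : Fin n, dd (sgl i) f x * dd (sgl i) g x + g x * lapF f x := by
  unfold lapF
  have key : ∀ i : Fin n, dd (sgl i) (dd (sgl i) (fun y => f y * g y)) x
      = f x * dd (sgl i) (dd (sgl i) g) x + 2 * (dd (sgl i) f x * dd (sgl i) g x)
        + g x * dd (sgl i) (dd (sgl i) f) x := by
    intro i
    have h1 : dd (sgl i) (dd (sgl i) (fun y => f y * g y)) x
        = dd (sgl i) (fun y => f y * dd (sgl i) g y + g y * dd (sgl i) f y) x :=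
      dd_congrOn hU hx (fun y hy => dd_mul (diffAt hU hf hy) (diffAt hU hg hy) _) _
    rw [h1, dd_add ((diffAt hU hf hx).fun_mul (diffAt hU (smooth_dd hU hg _) hx))
      ((diffAt hU hg hx).fun_mul (diffAt hU (smooth_dd hU hf _) hx)),
      dd_mul (diffAt hU hf hx) (diffAt hU (smooth_dd hU hg _) hx),
      dd_mul (diffAt hU hg hx) (diffAt hU (smooth_dd hU hf _) hx)]
    ring
  rw [Finset.sum_congr rfl (fun i _ => key i)]
  rw [Finset.sum_add_distrib, Finset.sum_add_distrib, ← Finset.mul_sum, ← Finset.mul_sum,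
    ← Finset.mul_sum]

lemma lapF_dd {f : EE → F} {U : Set EE} (hU : IsOpen U)
    (hf : ContDiffOn ℝ (⊤ : ℕ∞) f U) {x : EE} (hx : x ∈ U) (v : EE) :
    lapF (dd v f) x = dd v (lapF f) x := by
  have : dd v (lapF f) x = ∑ i : Fin n, dd v (dd (sgl i) (dd (sgl i) f)) x := by
    unfold lapF
    exact dd_sum (fun i _ => diffAt hU ((smooth_dd hU (smooth_dd hU hf _) _)) hx) v
  rw [this]
  unfold lapF
  refine Finset.sum_congr rfl (fun i _ => ?_)
  have h1 : dd v (dd (sgl i) (dd (sgl i) f)) x = dd (sgl i) (dd v (dd (sgl i) f)) x :=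
    dd_comm hU (smooth_dd hU hf _) hx v _
  have h2 : dd (sgl i) (dd v (dd (sgl i) f)) x = dd (sgl i) (dd (sgl i) (dd v f)) x :=
    dd_congrOn hU hx (fun y hy => dd_comm hU hf hy v _) _
  exact (h1.trans h2).symm

lemma lapF_dd_eq_zero {f : EE → F} {U : Set EE} (hU : IsOpen U)
    (hf : ContDiffOn ℝ (⊤ : ℕ∞) f U) (hharm : ∀ y ∈ U, lapF f y = 0)
    {x : EE} (hx : x ∈ U) (v : EE) : lapF (dd v f) x = 0 := by
  rw [lapF_dd hU hf hx v]
  have : dd v (lapF f) x = dd v (fun _ => (0 : F)) x :=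
    dd_congrOn hU hx (fun y hy => hharm y hy) v
  rw [this]
  simp [dd]

lemma lapF_fderiv {f : EE → F} {U : Set EE} (hU : IsOpen U)
    (hf : ContDiffOn ℝ (⊤ : ℕ∞) f U) (hharm : ∀ y ∈ U, lapF f y = 0)
    {x : EE} (hx : x ∈ U) : lapF (fderiv ℝ f) x = 0 := by
  ext v
  have hsm := smooth_fderiv hU hf
  have key : ∀ i : Fin n, (dd (sgl i) (dd (sgl i) (fderiv ℝ f)) x) v
      = dd (sgl i) (dd (sgl i) (dd v f)) x := by
    intro i
    have hdd : DifferentiableAt ℝ (dd (sgl i) (fderiv ℝ f)) x :=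
      diffAt hU (smooth_dd hU hsm _) hx
    rw [← dd_clm_apply hdd v (sgl i)]
    refine dd_congrOn hU hx (fun y hy => ?_) _
    rw [← dd_clm_apply (diffAt hU hsm hy) v (sgl i)]
    refine dd_congrOn hU hy (fun z hz => rfl) _
  have : (lapF (fderiv ℝ f) x) v = lapF (dd v f) x := by
    unfold lapF
    rw [ContinuousLinearMap.sum_apply]
    exact Finset.sum_congr rfl (fun i _ => key i)
  rw [ContinuousLinearMap.zero_apply, this]
  exact lapF_dd_eq_zero hU hf hharm hx v


section OneD

-- 1D second derivative test
lemma second_deriv_test {φ ψ : ℝ → ℝ} {c : ℝ}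
    (hmax : IsLocalMax φ 0)
    (hd : ∀ᶠ t in 𝓝 (0:ℝ), HasDerivAt φ (ψ t) t)
    (hdd : HasDerivAt ψ c 0) : c ≤ 0 := by
  by_contra hc
  push_neg at hc
  have hψ0 : ψ 0 = 0 := by
    have h1 : deriv φ 0 = ψ 0 := hd.self_of_nhds.deriv
    have h2 : deriv φ 0 = 0 := hmax.deriv_eq_zero
    rw [← h1, h2]
  have hslope : Tendsto (fun t => ψ t / t) (𝓝[≠] (0:ℝ)) (𝓝 c) := by
    have := hasDerivAt_iff_tendsto_slope.1 hdd
    refine this.congr' ?_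
    filter_upwards [self_mem_nhdsWithin] with t ht
    simp [slope_def_field, hψ0, div_eq_iff, sub_zero]
  have hev : ∀ᶠ t in 𝓝[≠] (0:ℝ), 0 < ψ t / t :=
    hslope.eventually (eventually_gt_nhds hc)
  -- get ε with all properties on the ball
  obtain ⟨s₁, hs₁, hs₁'⟩ := _root_.eventually_nhds_iff.1 hd
  obtain ⟨s₂, hs₂, hs₂'⟩ := _root_.eventually_nhds_iff.1 hmax
  have hev' : ∀ᶠ t in 𝓝 (0:ℝ), t ≠ 0 → 0 < ψ t / t := eventually_nhdsWithin_iff.1 hev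
  obtain ⟨s₃, hs₃, hs₃'⟩ := _root_.eventually_nhds_iff.1 hev'
  obtain ⟨ε, hε, hball⟩ := Metric.mem_nhds_iff.1
    (Filter.inter_mem (Filter.inter_mem (hs₁'.1.mem_nhds hs₁'.2) (hs₂'.1.mem_nhds hs₂'.2))
      (hs₃'.1.mem_nhds hs₃'.2))
  have hmem : ∀ t : ℝ, |t| < ε → (HasDerivAt φ (ψ t) t ∧ φ t ≤ φ 0) ∧ (t ≠ 0 → 0 < ψ t / t) := by
    intro t ht
    have : t ∈ Metric.ball (0:ℝ) ε := by simpa [Real.dist_eq] using ht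
    have := hball this
    exact ⟨⟨hs₁ _ this.1.1, hs₂ _ this.1.2⟩, hs₃ _ this.2⟩
  -- φ is strictly increasing on [0, ε/2]
  have hsm : StrictMonoOn φ (Set.Icc 0 (ε/2)) := by
    apply strictMonoOn_of_deriv_pos (convex_Icc _ _)
    · intro t ht
      have ht' : |t| < ε := by
        rw [abs_lt]; constructor <;> [linarith [ht.1]; linarith [ht.2, hε]]
      exact ((hmem t ht').1.1).continuousAt.continuousWithinAt
    · intro t ht
      rw [interior_Icc] at ht
      have ht' : |t| < ε := by
        rw [abs_lt]; constructor <;> [linarith [ht.1]; linarith [ht.2, hε]]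
      rw [((hmem t ht').1.1).deriv]
      have := (hmem t ht').2 (ne_of_gt ht.1)
      have htpos := ht.1
      have hψpos : 0 < ψ t := by
        have h := mul_pos this htpos
        rwa [div_mul_cancel₀ _ (ne_of_gt htpos)] at h
      exact hψpos
    
  have h1 : φ 0 < φ (ε/4) := by
    apply hsm (Set.mem_Icc.2 ⟨le_refl _, by linarith⟩) (Set.mem_Icc.2 ⟨by linarith, by linarith⟩)
    linarith
  have h2 : φ (ε/4) ≤ φ 0 := by
    have : |ε/4| < ε := by rw [abs_of_pos (by linarith)]; linarith
    exact ((hmem _ this).1).2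
  linarith

end OneD

-- the function q(y) = ∑ yᵢ²
noncomputable def qf : EuclideanSpace ℝ (Fin n) → ℝ := fun y => ∑ i : Fin n, y i * y i

lemma qf_eq_norm_sq (y : EE) : qf y = ‖y‖ ^ 2 := by
  rw [EuclideanSpace.norm_eq]
  rw [Real.sq_sqrt (by positivity)]
  simp [qf, sq_abs, pow_two]

lemma qf_nonneg (y : EE) : 0 ≤ qf y := by
  rw [qf_eq_norm_sq]; positivity

lemma contDiff_qf : ContDiff ℝ (⊤ : ℕ∞) (qf (n := n)) := by
  apply ContDiff.sum (fun i _ => ?_)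
  have h : ContDiff ℝ (⊤ : ℕ∞) (fun y : EE => y i) := by
    have h2 : (fun y : EE => y i) = ⇑(EuclideanSpace.proj (𝕜 := ℝ) i) := by
      funext y; simp
    rw [h2]
    exact (EuclideanSpace.proj (𝕜 := ℝ) i).contDiff
  exact h.mul h

lemma dd_proj {x : EE} (v : EE) (j : Fin n) : dd v (fun y : EE => y j) x = v j := by
  have h : (fun y : EE => y j) = ⇑(EuclideanSpace.proj (𝕜 := ℝ) j) := by
    funext y; simp
  simp only [dd, h, ContinuousLinearMap.fderiv]
  simp

lemma diffAt_coord {x : EE} (j : Fin n) : DifferentiableAt ℝ (fun y : EE => y j) x := by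
  have h : (fun y : EE => y j) = ⇑(EuclideanSpace.proj (𝕜 := ℝ) j) := by
    funext y; simp
  rw [h]; exact (EuclideanSpace.proj (𝕜 := ℝ) j).differentiableAt


end HarmAux

namespace HarmAux
variable {n : ℕ}
local notation "EE" => EuclideanSpace ℝ (Fin n)

lemma dd_qf {x : EE} (i : Fin n) : dd (sgl i) qf x = 2 * x i := by
  unfold qf
  rw [dd_sum (fun j _ => (diffAt_coord j).fun_mul (diffAt_coord j))]
  have h2 : ∀ j : Fin n, dd (sgl i) (fun y : EE => y j * y j) x
      = x j * ((if j = i then (1:ℝ) else 0) + (if j = i then 1 else 0)) := by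
    intro j
    rw [dd_mul (diffAt_coord j) (diffAt_coord j), dd_proj]
    have hsgl : sgl i j = if j = i then (1:ℝ) else 0 := by
      simp [sgl, EuclideanSpace.single_apply]
    rw [hsgl]; ring
  rw [Finset.sum_congr rfl (fun j _ => h2 j)]
  rw [Finset.sum_congr rfl (fun j _ => by
    rw [show x j * ((if j = i then (1:ℝ) else 0) + (if j = i then 1 else 0))
      = if j = i then 2 * x j else 0 by split_ifs with h <;> simp [h] <;> ring])]
  simp

lemma lapF_qf {x : EE} : lapF qf x = 2 * n := by
  unfold lapF
  have key : ∀ i : Fin n, dd (sgl i) (dd (sgl i) qf) x = 2 := by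
    intro i
    have h1 : dd (sgl i) (dd (sgl i) qf) x = dd (sgl i) (fun y => 2 * y i) x :=
      dd_congrOn isOpen_univ (Set.mem_univ x) (fun y _ => dd_qf i) _
    rw [h1, dd_const_mul 2 (diffAt_coord i), dd_proj]
    have : sgl i i = 1 := by simp [sgl, EuclideanSpace.single_apply]
    rw [this]; ring
  rw [Finset.sum_congr rfl (fun i _ => key i)]
  simp [mul_comm]

lemma lapF_const_mul {f : EE → ℝ} {U : Set EE} (hU : IsOpen U) (c : ℝ)
    (hf : ContDiffOn ℝ (⊤ : ℕ∞) f U) {x : EE} (hx : x ∈ U) :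
    lapF (fun y => c * f y) x = c * lapF f x := by
  unfold lapF
  rw [Finset.mul_sum]
  refine Finset.sum_congr rfl (fun i _ => ?_)
  have h1 : dd (sgl i) (dd (sgl i) (fun y => c * f y)) x
      = dd (sgl i) (fun y => c * dd (sgl i) f y) x :=
    dd_congrOn hU hx (fun y hy => dd_const_mul c (diffAt hU hf hy) _) _
  rw [h1, dd_const_mul c (diffAt hU (smooth_dd hU hf _) hx)]

end HarmAux

namespace HarmAux
variable {n : ℕ}
local notation "EE" => EuclideanSpace ℝ (Fin n)

lemma max_principle (hn : 0 < n) {U : Set EE} (hU : IsOpen U) (hb : Bornology.IsBounded U)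
    {g : EE → ℝ} (hc : ContinuousOn g (closure U)) (hsm : ContDiffOn ℝ (⊤ : ℕ∞) g U)
    (hsub : ∀ x ∈ U, 0 ≤ lapF g x) {M : ℝ} (hM : ∀ y ∈ frontier U, g y ≤ M) :
    ∀ x ∈ closure U, g x ≤ M := by
  intro x hx
  obtain ⟨r, hr⟩ := hb.subset_closedBall 0
  have hclos : closure U ⊆ Metric.closedBall 0 r := closure_minimal hr Metric.isClosed_closedBall
  have hr0 : 0 ≤ r := by
    have := hclos hx
    simp only [Metric.mem_closedBall, dist_zero_right] at this
    linarith [norm_nonneg x]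
  have hK : IsCompact (closure U) :=
    Metric.isCompact_of_isClosed_isBounded isClosed_closure hb.closure
  have key : ∀ ε : ℝ, 0 < ε → g x ≤ M + ε * r ^ 2 := by
    intro ε hε
    set gε : EE → ℝ := fun y => g y + ε * qf y with hgε_def
    have hgεc : ContinuousOn gε (closure U) :=
      hc.add ((continuous_const.mul contDiff_qf.continuous).continuousOn)
    have hgε_sm : ContDiffOn ℝ (⊤ : ℕ∞) gε U :=
      hsm.add ((contDiff_const.mul contDiff_qf).contDiffOn)
    obtain ⟨p, hpmem, hp⟩ := hK.exists_isMaxOn ⟨x, hx⟩ hgεc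
    by_cases hpU : p ∈ U
    · exfalso
      have hlapq : lapF (fun y => ε * qf y) p = ε * (2 * n) := by
        rw [lapF_const_mul hU ε contDiff_qf.contDiffOn hpU, lapF_qf]
      have hlap : lapF gε p = lapF g p + ε * (2 * n) := by
        rw [hgε_def]
        rw [lapF_add hU hsm ((contDiff_const.mul contDiff_qf).contDiffOn) hpU, hlapq]
      have hpos : 0 < lapF gε p := by
        have h1 := hsub p hpU
        have h2 : (0:ℝ) < ε * (2 * n) := by positivity
        linarith [hlap ▸ add_pos_of_nonneg_of_pos h1 h2]
      have hterm : ∀ i : Fin n, dd (sgl i) (dd (sgl i) gε) p ≤ 0 := by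
        intro i
        set γ : ℝ → EE := fun t => p + t • sgl i with hγ_def
        have hγc : Continuous γ := by fun_prop
        have hγ0 : γ 0 = p := by simp [hγ_def]
        have htend : Tendsto γ (𝓝 0) (𝓝 p) := by
          have := hγc.tendsto 0
          rwa [hγ0] at this
        have hpath : ∀ t : ℝ, HasDerivAt γ (sgl i) t := by
          intro t
          have h := ((hasDerivAt_id t).smul_const (sgl i)).const_add p
          simpa [hγ_def] using h
        have hmaxφ : IsLocalMax (fun t => gε (γ t)) 0 := by
          have hev : ∀ᶠ t in 𝓝 (0:ℝ), γ t ∈ closure U :=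
            htend (mem_of_superset (hU.mem_nhds hpU) subset_closure)
          filter_upwards [hev] with t ht
          have := hp ht
          simpa [hγ0] using this
        have hdφ : ∀ᶠ t in 𝓝 (0:ℝ), HasDerivAt (fun t => gε (γ t))
            ((fun t => dd (sgl i) gε (γ t)) t) t := by
          have hev : ∀ᶠ t in 𝓝 (0:ℝ), γ t ∈ U := htend (hU.mem_nhds hpU)
          filter_upwards [hev] with t ht
          exact (diffAt hU hgε_sm ht).hasFDerivAt.comp_hasDerivAt t (hpath t)
        have hψd : HasDerivAt (fun t => dd (sgl i) gε (γ t))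
            (dd (sgl i) (dd (sgl i) gε) p) 0 := by
          have hdiff2 := diffAt hU (smooth_dd hU hgε_sm (sgl i)) hpU
          rw [← hγ0] at hdiff2
          have h := hdiff2.hasFDerivAt.comp_hasDerivAt 0 (hpath 0)
          rw [hγ0] at h
          exact h
        exact second_deriv_test hmaxφ hdφ hψd
      have hsum : lapF gε p ≤ 0 := Finset.sum_nonpos (fun i _ => hterm i)
      linarith
    · have hfr : p ∈ frontier U := by
        rw [frontier, hU.interior_eq]
        exact ⟨hpmem, hpU⟩
      have h1 : g x ≤ gε x := by
        have := qf_nonneg x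
        simp only [hgε_def]
        nlinarith
      have h2 : gε x ≤ gε p := hp hx
      have h3 : gε p ≤ M + ε * r ^ 2 := by
        have hqp : qf p ≤ r ^ 2 := by
          rw [qf_eq_norm_sq]
          have := hclos hpmem
          simp only [Metric.mem_closedBall, dist_zero_right] at this
          nlinarith [norm_nonneg p]
        have := hM p hfr
        simp only [hgε_def]
        nlinarith
      linarith
  by_contra hcon
  push_neg at hcon
  have hrr : (0:ℝ) ≤ r ^ 2 := by positivity
  have := key ((g x - M) / (2 * (r ^ 2 + 1))) (div_pos (by linarith) (by positivity))
  have hmain : ((g x - M) / (2 * (r ^ 2 + 1))) * r ^ 2 < g x - M := by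
    rw [div_mul_eq_mul_div, div_lt_iff₀ (by positivity)]
    nlinarith
  linarith

end HarmAux

namespace HarmAux
variable {n : ℕ}
local notation "EE" => EuclideanSpace ℝ (Fin n)

lemma qf_pos {x : EE} (hx : x ≠ 0) : 0 < qf x := by
  rw [qf_eq_norm_sq]
  have : 0 < ‖x‖ := norm_pos_iff.mpr hx
  positivity

lemma diffAt_qf {x : EE} : DifferentiableAt ℝ (qf (n := n)) x :=
  contDiff_qf.differentiable (by simp) |>.differentiableAt

lemma hasFDerivAt_qf (x : EE) : HasFDerivAt qf (fderiv ℝ qf x) x :=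
  diffAt_qf.hasFDerivAt

lemma diffAt_qf_rpow (e : ℝ) {x : EE} (hx : x ≠ 0) :
    DifferentiableAt ℝ (fun y : EE => qf y ^ e) x := by
  have h1 : ContDiffAt ℝ (⊤ : ℕ∞) (fun s : ℝ => s ^ e) (qf x) :=
    Real.contDiffAt_rpow_const_of_ne (ne_of_gt (qf_pos hx))
  exact (h1.comp x contDiff_qf.contDiffAt).differentiableAt (by simp)

lemma smoothOn_qf_rpow (e : ℝ) : ContDiffOn ℝ (⊤ : ℕ∞) (fun y : EE => qf y ^ e) {y : EE | y ≠ 0} := by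
  intro y hy
  have h1 : ContDiffAt ℝ (⊤ : ℕ∞) (fun s : ℝ => s ^ e) (qf y) :=
    Real.contDiffAt_rpow_const_of_ne (ne_of_gt (qf_pos hy))
  exact (h1.comp y contDiff_qf.contDiffAt).contDiffWithinAt

lemma dd_qf_rpow (e : ℝ) {x : EE} (hx : x ≠ 0) (i : Fin n) :
    dd (sgl i) (fun y : EE => qf y ^ e) x = e * qf x ^ (e - 1) * (2 * x i) := by
  have h1 : HasDerivAt (fun s : ℝ => s ^ e) (e * qf x ^ (e - 1)) (qf x) :=
    Real.hasDerivAt_rpow_const (Or.inl (ne_of_gt (qf_pos hx)))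
  have h2 : HasFDerivAt (fun y : EE => qf y ^ e)
      ((e * qf x ^ (e - 1)) • fderiv ℝ qf x) x :=
    h1.comp_hasFDerivAt x (hasFDerivAt_qf x)
  have h3 : dd (sgl i) (fun y : EE => qf y ^ e) x
      = ((e * qf x ^ (e - 1)) • fderiv ℝ qf x) (sgl i) := by
    simp only [dd, h2.fderiv]
  rw [h3]
  have h4 : (fderiv ℝ qf x) (sgl i) = 2 * x i := dd_qf i
  simp [h4, smul_eq_mul]

lemma lapF_qf_rpow (e : ℝ) {x : EE} (hx : x ≠ 0) :
    lapF (fun y : EE => qf y ^ e) x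
      = 2 * e * (n + 2 * (e - 1)) * qf x ^ (e - 1) := by
  have hU : IsOpen {y : EE | y ≠ 0} := isOpen_compl_singleton
  have key : ∀ i : Fin n, dd (sgl i) (dd (sgl i) (fun y : EE => qf y ^ e)) x
      = 2 * e * qf x ^ (e - 1) + 4 * e * (e - 1) * (x i * x i) * qf x ^ (e - 2) := by
    intro i
    have h1 : dd (sgl i) (dd (sgl i) (fun y : EE => qf y ^ e)) x
        = dd (sgl i) (fun y => (2 * e) * (y i * qf y ^ (e - 1))) x := by
      refine dd_congrOn hU hx (fun y hy => ?_) _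
      rw [dd_qf_rpow e hy i]; ring
    rw [h1, dd_const_mul _ ((diffAt_coord i).fun_mul (diffAt_qf_rpow (e-1) hx)),
      dd_mul (diffAt_coord i) (diffAt_qf_rpow (e-1) hx), dd_qf_rpow (e-1) hx i, dd_proj]
    have hsgl : sgl i i = (1:ℝ) := by simp [sgl, EuclideanSpace.single_apply]
    rw [hsgl]
    have : qf x ^ (e - 1 - 1) = qf x ^ (e - 2) := by ring_nf
    rw [this]; ring
  unfold lapF
  rw [Finset.sum_congr rfl (fun i _ => key i)]
  rw [Finset.sum_add_distrib]
  have h5 : ∑ _i : Fin n, 2 * e * qf x ^ (e - 1) = n * (2 * e * qf x ^ (e - 1)) := by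
    rw [Finset.sum_const]; simp [mul_comm]
  have h6 : ∑ i : Fin n, 4 * e * (e - 1) * (x i * x i) * qf x ^ (e - 2)
      = 4 * e * (e - 1) * qf x * qf x ^ (e - 2) := by
    rw [← Finset.sum_mul, ← Finset.mul_sum]
    unfold qf; ring
  rw [h5, h6]
  have h7 : qf x * qf x ^ (e - 2) = qf x ^ (e - 1) := by
    nth_rewrite 1 [← Real.rpow_one (qf x)]
    rw [← Real.rpow_add (qf_pos hx)]
    ring_nf
  rw [mul_assoc (4 * e * (e - 1)), h7]
  ring

/-- the barrier: `bar β x = ‖x‖ ^ β`, harmonic away from 0 when `β = 2 - n`. -/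
noncomputable def bar (β : ℝ) : EuclideanSpace ℝ (Fin n) → ℝ := fun y => qf y ^ (β / 2)

lemma bar_eq_norm {β : ℝ} (y : EE) : bar β y = ‖y‖ ^ β := by
  unfold bar
  rw [qf_eq_norm_sq, ← Real.rpow_natCast (‖y‖) 2, ← Real.rpow_mul (norm_nonneg y)]
  norm_num
  rw [mul_div_cancel₀]
  norm_num

lemma lapF_bar {x : EE} (hx : x ≠ 0) :
    lapF (bar (2 - (n:ℝ))) x = 0 := by
  unfold bar
  rw [lapF_qf_rpow _ hx]
  have : ((n:ℝ) + 2 * ((2 - (n:ℝ)) / 2 - 1)) = 0 := by ring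
  rw [this]
  ring

lemma smoothOn_bar (β : ℝ) : ContDiffOn ℝ (⊤ : ℕ∞) (bar (n := n) β) {y : EE | y ≠ 0} :=
  smoothOn_qf_rpow _

end HarmAux

namespace HarmAux
variable {n : ℕ}
local notation "EE" => EuclideanSpace ℝ (Fin n)

lemma exterior_decay (hn : 3 ≤ n) {R' : ℝ} (hR' : 0 < R') {u : EE → ℝ}
    (hu : ContDiffOn ℝ (⊤ : ℕ∞) u {y : EE | R' < ‖y‖})
    (hharm : ∀ y : EE, R' < ‖y‖ → lapF u y = 0)
    {C β : ℝ} (hC : 0 ≤ C) (hβ : β < 0)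
    (hdec : ∀ y : EE, R' < ‖y‖ → |u y| ≤ C * ‖y‖ ^ β) :
    ∀ x : EE, 2 * R' ≤ ‖x‖ →
      |u x| ≤ (C * (2*R') ^ β * (2*R') ^ ((n:ℝ) - 2)) * ‖x‖ ^ (2 - (n:ℝ)) := by
  intro x hx
  set R₁ : ℝ := 2 * R' with hR₁def
  have hR₁ : 0 < R₁ := by positivity
  have hR₁R' : R' < R₁ := by rw [hR₁def]; linarith
  set M' : ℝ := C * R₁ ^ β * R₁ ^ ((n:ℝ) - 2) with hM'def
  have hM'0 : 0 ≤ M' := by positivity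
  have hcancel : M' * R₁ ^ (2 - (n:ℝ)) = C * R₁ ^ β := by
    rw [hM'def, mul_assoc, mul_assoc, ← Real.rpow_add hR₁]
    norm_num
  have key : ∀ s : ℝ, s = 1 ∨ s = -1 → s * u x ≤ M' * ‖x‖ ^ (2 - (n:ℝ)) := by
    intro s hs
    have habs : ∀ t : ℝ, s * t ≤ |t| := by
      intro t
      rcases hs with h | h <;> rw [h] <;> simp [le_abs_self, neg_le_abs]
    rcases eq_or_lt_of_le hx with heq | hlt
    · have hxR' : R' < ‖x‖ := by rw [← heq]; exact hR₁R'
      have h1 : |u x| ≤ C * R₁ ^ β := by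
        have := hdec x hxR'
        rwa [← heq] at this
      calc s * u x ≤ |u x| := habs _
        _ ≤ C * R₁ ^ β := h1
        _ = M' * ‖x‖ ^ (2 - (n:ℝ)) := by rw [← heq, hcancel]
    · have hmain : ∀ ρ : ℝ, ‖x‖ < ρ → s * u x - M' * bar (2 - (n:ℝ)) x ≤ C * ρ ^ β := by
        intro ρ hρ
        have hρR₁ : R₁ < ρ := lt_trans hlt hρ
        have hρ0 : 0 < ρ := lt_trans hR₁ hρR₁
        set A : Set EE := {y | R₁ < ‖y‖ ∧ ‖y‖ < ρ} with hAdef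
        have hAopen : IsOpen A :=
          (isOpen_lt continuous_const continuous_norm).inter
            (isOpen_lt continuous_norm continuous_const)
        have hAbdd : Bornology.IsBounded A :=
          (Metric.isBounded_ball (x := (0:EE)) (r := ρ)).subset
            (fun y hy => by simpa [Metric.mem_ball, dist_zero_right] using hy.2)
        have hclosA : closure A ⊆ {y : EE | R₁ ≤ ‖y‖ ∧ ‖y‖ ≤ ρ} :=
          closure_minimal (fun y hy => ⟨le_of_lt hy.1, le_of_lt hy.2⟩)
            ((isClosed_le continuous_const continuous_norm).inter
              (isClosed_le continuous_norm continuous_const))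
        have hsubext : ∀ y : EE, y ∈ closure A → R' < ‖y‖ := fun y hy =>
          lt_of_lt_of_le hR₁R' (hclosA hy).1
        have hsubne : ∀ y : EE, y ∈ closure A → y ≠ 0 := fun y hy => by
          have h2 := lt_of_lt_of_le (lt_trans hR' hR₁R') (hclosA hy).1
          intro h; rw [h] at h2; simp at h2
        set g : EE → ℝ := fun y => s * u y + (-(M')) * bar (2 - (n:ℝ)) y with hgdef
        have hgc : ContinuousOn g (closure A) := by
          apply ContinuousOn.add
          · exact continuousOn_const.mul
              ((hu.continuousOn).mono (fun y hy => hsubext y hy))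
          · exact continuousOn_const.mul
              ((smoothOn_bar _).continuousOn.mono (fun y hy => hsubne y hy))
        have husm : ContDiffOn ℝ (⊤ : ℕ∞) u A :=
          hu.mono (fun z hz => hsubext z (subset_closure hz))
        have hbsm : ContDiffOn ℝ (⊤ : ℕ∞) (bar (n := n) (2 - (n:ℝ))) A :=
          (smoothOn_bar _).mono (fun z hz => hsubne z (subset_closure hz))
        have hgsm : ContDiffOn ℝ (⊤ : ℕ∞) g A :=
          (contDiffOn_const.mul husm).add (contDiffOn_const.mul hbsm)
        have hgsub : ∀ y ∈ A, 0 ≤ lapF g y := by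
          intro y hy
          have hy1 : R' < ‖y‖ := hsubext y (subset_closure hy)
          have hy2 : y ≠ 0 := hsubne y (subset_closure hy)
          have e1 : lapF g y = s * lapF u y + (-(M')) * lapF (bar (2 - (n:ℝ))) y := by
            rw [hgdef]
            rw [lapF_add hAopen (contDiffOn_const.mul husm) (contDiffOn_const.mul hbsm) hy,
              lapF_const_mul hAopen s husm hy, lapF_const_mul hAopen _ hbsm hy]
          rw [e1, hharm y hy1, lapF_bar hy2]
          simp
        have hfr : ∀ y ∈ frontier A, g y ≤ C * ρ ^ β := by
          intro y hy
          rw [hAopen.frontier_eq] at hy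
          obtain ⟨hyc, hynA⟩ := hy
          have hyb := hclosA hyc
          have hbar : bar (n := n) (2 - (n:ℝ)) y = ‖y‖ ^ (2 - (n:ℝ)) := bar_eq_norm y
          have hbar0 : 0 ≤ bar (n := n) (2 - (n:ℝ)) y := by
            rw [hbar]; exact Real.rpow_nonneg (norm_nonneg y) _
          rcases eq_or_lt_of_le hyb.1 with h1 | h1
          · -- ‖y‖ = R₁
            have hsu : s * u y ≤ C * R₁ ^ β := by
              calc s * u y ≤ |u y| := habs _
                _ ≤ C * ‖y‖ ^ β := hdec y (hsubext y hyc)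
                _ = C * R₁ ^ β := by rw [← h1]
            have hbareq : M' * bar (n := n) (2 - (n:ℝ)) y = C * R₁ ^ β := by
              rw [hbar, ← h1, hcancel]
            have : g y ≤ 0 := by rw [hgdef]; simp only; nlinarith
            have hpos : 0 ≤ C * ρ ^ β := by positivity
            linarith
          · have h2 : ‖y‖ = ρ := by
              rcases eq_or_lt_of_le hyb.2 with h2 | h2
              · exact h2
              · exact absurd ⟨h1, h2⟩ hynA
            have hsu : s * u y ≤ C * ρ ^ β := by
              calc s * u y ≤ |u y| := habs _
                _ ≤ C * ‖y‖ ^ β := hdec y (hsubext y hyc)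
                _ = C * ρ ^ β := by rw [h2]
            rw [hgdef]; simp only; nlinarith
        have hxA : x ∈ A := ⟨hlt, hρ⟩
        have := max_principle (by omega) hAopen hAbdd hgc hgsm hgsub hfr x (subset_closure hxA)
        rw [hgdef] at this
        simp only at this
        linarith
      have htends : Tendsto (fun ρ : ℝ => C * ρ ^ β) atTop (𝓝 0) := by
        have h0 : (0:ℝ) < -β := by linarith
        have := (tendsto_rpow_neg_atTop h0).const_mul C
        simp only [neg_neg] at this
        simpa using this
      have hev : ∀ᶠ ρ in atTop, s * u x - M' * bar (2 - (n:ℝ)) x ≤ C * ρ ^ β :=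
        (eventually_gt_atTop ‖x‖).mono (fun ρ h => hmain ρ h)
      have hle : s * u x - M' * bar (2 - (n:ℝ)) x ≤ 0 := ge_of_tendsto htends hev
      have hbar : bar (n := n) (2 - (n:ℝ)) x = ‖x‖ ^ (2 - (n:ℝ)) := bar_eq_norm x
      rw [hbar] at hle
      linarith
  have h1 := key 1 (Or.inl rfl)
  have h2 := key (-1) (Or.inr rfl)
  rw [abs_le]
  constructor
  · nlinarith
  · nlinarith

end HarmAux

namespace HarmAux
variable {n : ℕ}
local notation "EE" => EuclideanSpace ℝ (Fin n)

section Bernstein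

noncomputable def qz (z : EE) : EE → ℝ := fun y => ∑ i : Fin n, (y i - z i) * (y i - z i)

lemma qz_eq_norm_sq {z : EE} (y : EE) : qz z y = ‖y - z‖ ^ 2 := by
  have : qz z y = qf (y - z) := by
    unfold qz qf
    refine Finset.sum_congr rfl (fun i _ => ?_)
    simp
  rw [this, qf_eq_norm_sq]

lemma qz_nonneg {z : EE} (y : EE) : 0 ≤ qz z y := by rw [qz_eq_norm_sq]; positivity

lemma qz_self {z : EE} : qz z z = 0 := by rw [qz_eq_norm_sq]; simp

lemma diffAt_coordz {z x : EE} (j : Fin n) :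
    DifferentiableAt ℝ (fun y : EE => y j - z j) x := (diffAt_coord j).sub_const _

lemma dd_coordz {z x : EE} (v : EE) (j : Fin n) :
    dd v (fun y : EE => y j - z j) x = v j := by
  have h : dd v (fun y : EE => y j - z j) x = dd v (fun y : EE => y j) x := by
    simp only [dd, fderiv_sub_const]
  rw [h, dd_proj]

lemma contDiff_qz {z : EE} : ContDiff ℝ (⊤ : ℕ∞) (qz (n := n) z) := by
  apply ContDiff.sum (fun i _ => ?_)
  have h : ContDiff ℝ (⊤ : ℕ∞) (fun y : EE => y i - z i) := by
    have h2 : (fun y : EE => y i) = ⇑(EuclideanSpace.proj (𝕜 := ℝ) i) := by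
      funext y; simp
    exact (h2 ▸ (EuclideanSpace.proj (𝕜 := ℝ) i).contDiff).sub contDiff_const
  exact h.mul h

lemma diffAt_qz {z x : EE} : DifferentiableAt ℝ (qz (n := n) z) x :=
  contDiff_qz.differentiable (by simp) |>.differentiableAt

lemma dd_qz {z x : EE} (i : Fin n) : dd (sgl i) (qz z) x = 2 * (x i - z i) := by
  unfold qz
  rw [dd_sum (fun j _ => (diffAt_coordz j).fun_mul (diffAt_coordz j))]
  have h2 : ∀ j : Fin n, dd (sgl i) (fun y : EE => (y j - z j) * (y j - z j)) x
      = if j = i then 2 * (x j - z j) else 0 := by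
    intro j
    rw [dd_mul (diffAt_coordz j) (diffAt_coordz j), dd_coordz]
    have hsgl : sgl i j = if j = i then (1:ℝ) else 0 := by
      simp [sgl, EuclideanSpace.single_apply]
    rw [hsgl]
    split_ifs with h <;> ring
  rw [Finset.sum_congr rfl (fun j _ => h2 j)]
  simp

lemma lapF_qz {z x : EE} : lapF (qz z) x = 2 * n := by
  unfold lapF
  have key : ∀ i : Fin n, dd (sgl i) (dd (sgl i) (qz z)) x = 2 := by
    intro i
    have h1 : dd (sgl i) (dd (sgl i) (qz z)) x = dd (sgl i) (fun y => 2 * (y i - z i)) x :=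
      dd_congrOn isOpen_univ (Set.mem_univ x) (fun y _ => dd_qz i) _
    rw [h1, dd_const_mul 2 (diffAt_coordz i), dd_coordz]
    have : sgl i i = (1:ℝ) := by simp [sgl, EuclideanSpace.single_apply]
    rw [this]; ring
  rw [Finset.sum_congr rfl (fun i _ => key i)]
  simp [mul_comm]

lemma lapF_const {x : EE} (c : ℝ) : lapF (n := n) (fun _ => c) x = 0 := by
  unfold lapF
  have : ∀ i : Fin n, dd (sgl i) (dd (sgl i) (fun _ : EE => c)) x = 0 := by
    intro i
    have h1 : dd (sgl i) (dd (sgl i) (fun _ : EE => c)) x = dd (sgl i) (fun _ : EE => (0:ℝ)) x := by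
      refine dd_congrOn isOpen_univ (Set.mem_univ x) (fun y _ => ?_) _
      simp [dd]
    rw [h1]
    simp [dd]
  simp [Finset.sum_congr rfl (fun i _ => this i)]

set_option maxHeartbeats 2000000 in
lemma bernstein_scalar (hn : 0 < n) (z : EE) {ρ : ℝ} (hρ : 0 < ρ)
    {V : Set EE} (hV : IsOpen V) (hball : Metric.closedBall z ρ ⊆ V)
    {u : EE → ℝ} (hu : ContDiffOn ℝ (⊤ : ℕ∞) u V) (hharm : ∀ y ∈ V, lapF u y = 0)
    {A : ℝ} (hA : ∀ y ∈ Metric.closedBall z ρ, |u y| ≤ A) :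
    ∑ i : Fin n, dd (sgl i) u z * dd (sgl i) u z ≤ (2 * n + 12) * A ^ 2 / ρ ^ 2 := by
  haveI : Nontrivial EE := by
    refine ⟨⟨0, sgl ⟨0, hn⟩, fun h => ?_⟩⟩
    have h1 : ‖(sgl (⟨0, hn⟩ : Fin n) : EE)‖ = 1 := by simp [sgl]
    rw [← h] at h1
    simp at h1
  set p1 : EE → ℝ := fun y => ρ ^ 2 + (-1) * qz z y with hp1def
  set w : EE → ℝ := fun y => ∑ k : Fin n, dd (sgl k) u y * dd (sgl k) u y with hwdef
  set lam : ℝ := (2 * n + 12) * ρ ^ 2 with hlamdef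
  have hlam0 : 0 ≤ lam := by positivity
  set G : EE → ℝ := fun y => (p1 y * p1 y) * w y + lam * (u y * u y) with hGdef
  have hp1sm : ContDiff ℝ (⊤ : ℕ∞) p1 := contDiff_const.add (contDiff_const.mul contDiff_qz)
  have hwsm : ContDiffOn ℝ (⊤ : ℕ∞) w V :=
    ContDiffOn.sum (fun k _ => (smooth_dd hV hu _).mul (smooth_dd hV hu _))
  have hGsm : ContDiffOn ℝ (⊤ : ℕ∞) G V :=
    (((hp1sm.contDiffOn.mul hp1sm.contDiffOn).mul hwsm)).add
      (contDiffOn_const.mul (hu.mul hu))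
  have hddp1 : ∀ (y : EE) (i : Fin n), dd (sgl i) p1 y = -2 * (y i - z i) := by
    intro y i
    rw [hp1def]
    rw [dd_add (differentiableAt_const _) ((differentiableAt_const _).fun_mul diffAt_qz),
      dd_const_mul _ diffAt_qz, dd_qz i]
    have h0 : dd (sgl i) (fun _ : EE => ρ ^ 2) y = 0 := by simp [dd]
    rw [h0]; ring
  have hlapp1 : ∀ y : EE, lapF p1 y = -(2 * n) := by
    intro y
    rw [hp1def]
    rw [lapF_add isOpen_univ contDiffOn_const (contDiffOn_const.mul contDiff_qz.contDiffOn)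
      (Set.mem_univ y), lapF_const, lapF_const_mul isOpen_univ _ contDiff_qz.contDiffOn
      (Set.mem_univ y), lapF_qz]
    ring
  have hlapeta : ∀ y : EE, lapF (fun t => p1 t * p1 t) y
      = -(4 * n) * p1 y + 8 * qz z y := by
    intro y
    rw [lapF_mul isOpen_univ hp1sm.contDiffOn hp1sm.contDiffOn (Set.mem_univ y), hlapp1]
    have h2 : ∑ i : Fin n, dd (sgl i) p1 y * dd (sgl i) p1 y = 4 * qz z y := by
      rw [Finset.sum_congr rfl (fun i _ => by rw [hddp1 y i])]
      unfold qz
      rw [Finset.mul_sum]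
      exact Finset.sum_congr rfl (fun i _ => by ring)
    rw [h2]; ring
  have hddw : ∀ y ∈ V, ∀ i : Fin n, dd (sgl i) w y
      = 2 * ∑ k : Fin n, dd (sgl k) u y * dd (sgl i) (dd (sgl k) u) y := by
    intro y hy i
    rw [hwdef]
    rw [dd_sum (fun k _ => (diffAt hV (smooth_dd hV hu _) hy).fun_mul
      (diffAt hV (smooth_dd hV hu _) hy))]
    rw [Finset.mul_sum]
    refine Finset.sum_congr rfl (fun k _ => ?_)
    rw [dd_mul (diffAt hV (smooth_dd hV hu _) hy) (diffAt hV (smooth_dd hV hu _) hy)]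
    ring
  have hlapw : ∀ y ∈ V, lapF w y
      = 2 * ∑ k : Fin n, ∑ i : Fin n,
          dd (sgl i) (dd (sgl k) u) y * dd (sgl i) (dd (sgl k) u) y := by
    intro y hy
    rw [hwdef]
    rw [lapF_sum hV (fun k _ => (smooth_dd hV hu _).mul (smooth_dd hV hu _)) hy]
    rw [Finset.mul_sum]
    refine Finset.sum_congr rfl (fun k _ => ?_)
    rw [lapF_mul hV (smooth_dd hV hu _) (smooth_dd hV hu _) hy]
    rw [lapF_dd_eq_zero hV hu hharm hy]
    ring
  have hlapu2 : ∀ y ∈ V, lapF (fun t => u t * u t) y = 2 * w y := by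
    intro y hy
    rw [lapF_mul hV hu hu hy, hharm y hy, hwdef]
    ring
  have hsub : ∀ y ∈ Metric.ball z ρ, 0 ≤ lapF G y := by
    intro y hy
    have hyV : y ∈ V := hball (Metric.ball_subset_closedBall hy)
    have hQρ : qz z y ≤ ρ ^ 2 := by
      rw [qz_eq_norm_sq]
      have h3 : ‖y - z‖ < ρ := by
        rw [← dist_eq_norm]; exact Metric.mem_ball.mp hy
      nlinarith [norm_nonneg (y - z)]
    have hQ0 : 0 ≤ qz z y := qz_nonneg y
    have hPQ : p1 y = ρ ^ 2 - qz z y := by rw [hp1def]; ring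
    have hP0 : 0 ≤ p1 y := by rw [hPQ]; linarith
    have hlapG : lapF G y = (p1 y * p1 y) * lapF w y
        + 2 * ∑ i : Fin n, dd (sgl i) (fun t => p1 t * p1 t) y * dd (sgl i) w y
        + w y * (-(4 * n) * p1 y + 8 * qz z y) + lam * (2 * w y) := by
      rw [hGdef]
      rw [lapF_add hV ((hp1sm.contDiffOn.mul hp1sm.contDiffOn).mul hwsm)
        (contDiffOn_const.mul (hu.mul hu)) hyV]
      rw [lapF_const_mul hV _ (hu.mul hu) hyV, hlapu2 y hyV]
      rw [lapF_mul hV (hp1sm.contDiffOn.mul hp1sm.contDiffOn) hwsm hyV]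
      rw [hlapeta y]
    set S : ℝ := ∑ k : Fin n, ∑ i : Fin n,
        dd (sgl i) (dd (sgl k) u) y * dd (sgl i) (dd (sgl k) u) y with hSdef
    set T : ℝ := ∑ i : Fin n,
        (y i - z i) * (∑ k : Fin n, dd (sgl k) u y * dd (sgl i) (dd (sgl k) u) y) with hTdef
    have hcross : ∑ i : Fin n, dd (sgl i) (fun t => p1 t * p1 t) y * dd (sgl i) w y
        = -8 * p1 y * T := by
      rw [hTdef, Finset.mul_sum]
      refine Finset.sum_congr rfl (fun i _ => ?_)
      have h1 : dd (sgl i) (fun t => p1 t * p1 t) y = 2 * p1 y * (-2 * (y i - z i)) := by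
        rw [dd_mul ((hp1sm.differentiable (by simp)).differentiableAt)
          ((hp1sm.differentiable (by simp)).differentiableAt),
          hddp1 y i]
        ring
      rw [h1, hddw y hyV i]
      ring
    have hS0 : 0 ≤ S := Finset.sum_nonneg (fun k _ => Finset.sum_nonneg
      (fun i _ => mul_self_nonneg _))
    have hW0 : 0 ≤ w y := Finset.sum_nonneg (fun k _ => mul_self_nonneg _)
    have hT2 : T ^ 2 ≤ qz z y * (w y * S) := by
      have hcs1 : T ^ 2 ≤ (∑ i : Fin n, (y i - z i) ^ 2)
          * (∑ i : Fin n, (∑ k : Fin n, dd (sgl k) u y * dd (sgl i) (dd (sgl k) u) y) ^ 2) := by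
        rw [hTdef]
        exact Finset.sum_mul_sq_le_sq_mul_sq _ _ _
      have hq : (∑ i : Fin n, (y i - z i) ^ 2) = qz z y := by
        unfold qz
        exact Finset.sum_congr rfl (fun i _ => by rw [pow_two])
      have hw_eq : w y = ∑ k : Fin n, dd (sgl k) u y ^ 2 := by
        rw [hwdef]
        exact Finset.sum_congr rfl (fun k _ => by rw [pow_two])
      have hb : (∑ i : Fin n, (∑ k : Fin n, dd (sgl k) u y * dd (sgl i) (dd (sgl k) u) y) ^ 2)
          ≤ w y * S := by
        have hper : ∀ i ∈ (Finset.univ : Finset (Fin n)),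
            (∑ k : Fin n, dd (sgl k) u y * dd (sgl i) (dd (sgl k) u) y) ^ 2
            ≤ w y * (∑ k : Fin n, dd (sgl i) (dd (sgl k) u) y ^ 2) := by
          intro i _
          rw [hw_eq]
          exact Finset.sum_mul_sq_le_sq_mul_sq _ _ _
        calc (∑ i : Fin n, (∑ k : Fin n, dd (sgl k) u y * dd (sgl i) (dd (sgl k) u) y) ^ 2)
            ≤ ∑ i : Fin n, w y * (∑ k : Fin n, dd (sgl i) (dd (sgl k) u) y ^ 2) :=
              Finset.sum_le_sum hper
          _ = w y * ∑ i : Fin n, ∑ k : Fin n, dd (sgl i) (dd (sgl k) u) y ^ 2 := by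
              rw [Finset.mul_sum]
          _ = w y * S := by
              rw [hSdef, Finset.sum_comm]
              congr 1
              exact Finset.sum_congr rfl (fun i _ =>
                Finset.sum_congr rfl (fun k _ => by rw [pow_two]))
      calc T ^ 2 ≤ _ := hcs1
        _ ≤ qz z y * (w y * S) := by
            rw [hq]
            exact mul_le_mul_of_nonneg_left hb hQ0
    -- key AM-GM step
    have h1a : 256 * p1 y ^ 2 * T ^ 2 ≤ 256 * p1 y ^ 2 * (qz z y * (w y * S)) :=
      mul_le_mul_of_nonneg_left hT2 (by positivity)
    have h1 : (16 * p1 y * T) ^ 2 ≤ (2 * p1 y ^ 2 * S + 32 * (qz z y * w y)) ^ 2 := by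
      nlinarith [h1a, sq_nonneg (2 * p1 y ^ 2 * S - 32 * (qz z y * w y))]
    have h2 : 16 * p1 y * T ≤ 2 * p1 y ^ 2 * S + 32 * (qz z y * w y) :=
      (abs_le_of_sq_le_sq' h1 (by positivity)).2
    rw [hlapG, hlapw y hyV, hcross, ← hSdef, hlamdef]
    have hnn : (0:ℝ) ≤ (n:ℝ) := Nat.cast_nonneg n
    rw [hPQ] at h2 ⊢
    nlinarith [h2, mul_nonneg hW0 hQ0, mul_nonneg hW0 (by linarith : (0:ℝ) ≤ ρ ^ 2 - qz z y),
      mul_nonneg (mul_nonneg hnn hW0) hQ0,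
      mul_nonneg (mul_nonneg hnn hW0) (by linarith : (0:ℝ) ≤ ρ ^ 2 - qz z y)]
  -- apply the maximum principle on the ball
  have hclos : closure (Metric.ball z ρ) = Metric.closedBall z ρ := closure_ball z (ne_of_gt hρ)
  have hGc : ContinuousOn G (closure (Metric.ball z ρ)) := by
    rw [hclos]
    exact (hGsm.continuousOn).mono hball
  have hA0 : 0 ≤ A :=
    le_trans (abs_nonneg _) (hA z (Metric.mem_closedBall_self (le_of_lt hρ)))
  have hfr : ∀ y ∈ frontier (Metric.ball z ρ), G y ≤ lam * A ^ 2 := by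
    intro y hy
    rw [frontier_ball z (ne_of_gt hρ)] at hy
    have hyy : ‖y - z‖ = ρ := by
      rw [← dist_eq_norm]; exact Metric.mem_sphere.mp hy
    have hQ : qz z y = ρ ^ 2 := by rw [qz_eq_norm_sq, hyy]
    have hP : p1 y = 0 := by rw [hp1def]; simp only; rw [hQ]; ring
    have hau : |u y| ≤ A := hA y (Metric.sphere_subset_closedBall hy)
    rw [hGdef]
    simp only
    rw [hP]
    have habs2 : u y * u y ≤ A ^ 2 := by nlinarith [abs_nonneg (u y), le_abs_self (u y), neg_abs_le (u y)]
    nlinarith [mul_le_mul_of_nonneg_left habs2 hlam0]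
  have hGsmball : ContDiffOn ℝ (⊤ : ℕ∞) G (Metric.ball z ρ) :=
    hGsm.mono (le_trans Metric.ball_subset_closedBall hball)
  have hmp := max_principle hn Metric.isOpen_ball Metric.isBounded_ball hGc hGsmball hsub hfr
      z (subset_closure (Metric.mem_ball_self hρ))
  have hQz : qz z z = 0 := qz_self
  have hPz : p1 z = ρ ^ 2 := by rw [hp1def]; simp only; rw [hQz]; ring
  rw [hGdef] at hmp
  simp only at hmp
  rw [hPz] at hmp
  have hwz0 : 0 ≤ w z := Finset.sum_nonneg (fun k _ => mul_self_nonneg _)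
  have huz : 0 ≤ lam * (u z * u z) := mul_nonneg hlam0 (mul_self_nonneg _)
  have hfinal : w z ≤ (2 * n + 12) * A ^ 2 / ρ ^ 2 := by
    rw [le_div_iff₀ (by positivity)]
    rw [hlamdef] at hmp
    have hstep : ρ ^ 2 * (w z * ρ ^ 2) ≤ ρ ^ 2 * ((2 * n + 12) * A ^ 2) := by
      nlinarith [hmp, mul_nonneg (mul_nonneg (by positivity : (0:ℝ) ≤ 2 * (n:ℝ) + 12)
        (by positivity : (0:ℝ) ≤ ρ ^ 2)) (mul_self_nonneg (u z))]
    exact le_of_mul_le_mul_left hstep (by positivity)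
  exact hfinal

-- linear functional decomposition of a CLM applied to a vector
lemma clm_apply_sum_coords (T : EE →L[ℝ] ℝ) (v : EE) :
    T v = ∑ i : Fin n, v i * T (sgl i) := by
  have hv : v = ∑ i : Fin n, v i • sgl i := by
    ext j
    rw [WithLp.ofLp_sum, Fintype.sum_apply]
    simp only [PiLp.smul_apply, smul_eq_mul, sgl, EuclideanSpace.single_apply]
    rw [Finset.sum_congr rfl (fun i _ => by rw [mul_ite, mul_one, mul_zero])]
    simp
  conv_lhs => rw [hv]
  rw [map_sum]
  exact Finset.sum_congr rfl (fun i _ => by rw [map_smul]; rfl)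

lemma grad_bound (hn : 0 < n) {F : Type*} [NormedAddCommGroup F] [NormedSpace ℝ F]
    (z : EE) {ρ : ℝ} (hρ : 0 < ρ) {V : Set EE} (hV : IsOpen V)
    (hball : Metric.closedBall z ρ ⊆ V) {f : EE → F}
    (hf : ContDiffOn ℝ (⊤ : ℕ∞) f V) (hharm : ∀ y ∈ V, lapF f y = 0)
    {A : ℝ} (hA : ∀ y ∈ Metric.closedBall z ρ, ‖f y‖ ≤ A) :
    ‖fderiv ℝ f z‖ ≤ (2 * n + 12) * A / ρ := by
  have hzV : z ∈ V := hball (Metric.mem_closedBall_self (le_of_lt hρ))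
  have hA0 : 0 ≤ A := le_trans (norm_nonneg _) (hA z (Metric.mem_closedBall_self (le_of_lt hρ)))
  have hK0 : 0 ≤ (2 * (n:ℝ) + 12) * A / ρ := by positivity
  refine ContinuousLinearMap.opNorm_le_bound _ hK0 (fun v => ?_)
  by_cases hzero : fderiv ℝ f z v = 0
  · rw [hzero, norm_zero]
    positivity
  obtain ⟨φ, hφ1, hφ2⟩ := exists_dual_vector ℝ (fderiv ℝ f z v) (norm_ne_zero_iff.mpr hzero)
  set g : EE → ℝ := fun y => φ (f y) with hgdef
  have hgsm : ContDiffOn ℝ (⊤ : ℕ∞) g V := hf.continuousLinearMap_comp φ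
  have hgharm : ∀ y ∈ V, lapF g y = 0 := by
    intro y hy
    have := lapF_clm φ hV hf hy
    rw [hgdef, this, hharm y hy, map_zero]
  have hgA : ∀ y ∈ Metric.closedBall z ρ, |g y| ≤ A := by
    intro y hy
    calc |g y| = ‖φ (f y)‖ := (Real.norm_eq_abs _).symm
      _ ≤ ‖φ‖ * ‖f y‖ := φ.le_opNorm _
      _ ≤ 1 * A := by
          apply mul_le_mul (le_of_eq hφ1) (hA y hy) (norm_nonneg _) zero_le_one
      _ = A := one_mul A
  have hw := bernstein_scalar hn z hρ hV hball hgsm hgharm hgA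
  -- relate fderiv g z to fderiv f z
  have hgd : fderiv ℝ g z = φ.comp (fderiv ℝ f z) :=
    (φ.hasFDerivAt.comp z (diffAt hV hf hzV).hasFDerivAt).fderiv
  have heval : ‖fderiv ℝ f z v‖ = (fderiv ℝ g z) v := by
    rw [hgd]
    exact hφ2.symm
  rw [heval]
  have hexp : (fderiv ℝ g z) v = ∑ i : Fin n, v i * dd (sgl i) g z :=
    clm_apply_sum_coords (fderiv ℝ g z) v
  have hvsq : ∑ i : Fin n, v i * v i = ‖v‖ ^ 2 := qf_eq_norm_sq v
  have hcs : ((fderiv ℝ g z) v) ^ 2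
      ≤ (∑ i : Fin n, v i ^ 2) * (∑ i : Fin n, dd (sgl i) g z ^ 2) := by
    rw [hexp]
    exact Finset.sum_mul_sq_le_sq_mul_sq _ _ _
  have he1 : (∑ i : Fin n, v i ^ 2) = ‖v‖ ^ 2 := by
    rw [← hvsq]
    exact Finset.sum_congr rfl (fun i _ => by rw [pow_two])
  have he2 : (∑ i : Fin n, dd (sgl i) g z ^ 2)
      = ∑ i : Fin n, dd (sgl i) g z * dd (sgl i) g z :=
    Finset.sum_congr rfl (fun i _ => by rw [pow_two])
  have hsq : ((fderiv ℝ g z) v) ^ 2 ≤ ‖v‖ ^ 2 * ((2 * n + 12) * A ^ 2 / ρ ^ 2) := by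
    calc ((fderiv ℝ g z) v) ^ 2 ≤ (∑ i : Fin n, v i ^ 2) * (∑ i : Fin n, dd (sgl i) g z ^ 2) := hcs
      _ = ‖v‖ ^ 2 * (∑ i : Fin n, dd (sgl i) g z * dd (sgl i) g z) := by rw [he1, he2]
      _ ≤ ‖v‖ ^ 2 * ((2 * n + 12) * A ^ 2 / ρ ^ 2) := by
          apply mul_le_mul_of_nonneg_left hw (by positivity)
  have hfin : ((fderiv ℝ g z) v) ^ 2 ≤ ((2 * n + 12) * A / ρ * ‖v‖) ^ 2 := by
    have hnn : (1:ℝ) ≤ 2 * n + 12 := by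
      have : (0:ℝ) ≤ (n:ℝ) := Nat.cast_nonneg n
      linarith
    calc ((fderiv ℝ g z) v) ^ 2 ≤ ‖v‖ ^ 2 * ((2 * n + 12) * A ^ 2 / ρ ^ 2) := hsq
      _ = (2 * (n:ℝ) + 12) * A ^ 2 * ‖v‖ ^ 2 / ρ ^ 2 := by ring
      _ ≤ (2 * (n:ℝ) + 12) ^ 2 * A ^ 2 * ‖v‖ ^ 2 / ρ ^ 2 := by
          gcongr
          nlinarith [Nat.cast_nonneg (α := ℝ) n]
      _ = ((2 * ↑n + 12) * A / ρ * ‖v‖) ^ 2 := by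
          field_simp
  exact (abs_le_of_sq_le_sq' hfin (by positivity)).2

lemma exterior_decay_vec (hn : 3 ≤ n) {R' : ℝ} (hR' : 0 < R')
    {F : Type*} [NormedAddCommGroup F] [NormedSpace ℝ F] {f : EE → F}
    (hf : ContDiffOn ℝ (⊤ : ℕ∞) f {y : EE | R' < ‖y‖})
    (hharm : ∀ y : EE, R' < ‖y‖ → lapF f y = 0)
    {C β : ℝ} (hC : 0 ≤ C) (hβ : β < 0)
    (hdec : ∀ y : EE, R' < ‖y‖ → ‖f y‖ ≤ C * ‖y‖ ^ β) :
    ∀ x : EE, 2 * R' ≤ ‖x‖ →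
      ‖f x‖ ≤ (C * (2*R') ^ β * (2*R') ^ ((n:ℝ) - 2)) * ‖x‖ ^ (2 - (n:ℝ)) := by
  intro x hx
  by_cases hzero : f x = 0
  · rw [hzero, norm_zero]
    positivity
  obtain ⟨φ, hφ1, hφ2⟩ := exists_dual_vector ℝ (f x) (norm_ne_zero_iff.mpr hzero)
  have hVopen : IsOpen {y : EE | R' < ‖y‖} := isOpen_lt continuous_const continuous_norm
  set u : EE → ℝ := fun y => φ (f y) with hudef
  have husm : ContDiffOn ℝ (⊤ : ℕ∞) u {y : EE | R' < ‖y‖} := hf.continuousLinearMap_comp φ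
  have huharm : ∀ y : EE, R' < ‖y‖ → lapF u y = 0 := by
    intro y hy
    have := lapF_clm φ hVopen hf hy
    rw [hudef, this, hharm y hy, map_zero]
  have hudec : ∀ y : EE, R' < ‖y‖ → |u y| ≤ C * ‖y‖ ^ β := by
    intro y hy
    calc |u y| = ‖φ (f y)‖ := (Real.norm_eq_abs _).symm
      _ ≤ ‖φ‖ * ‖f y‖ := φ.le_opNorm _
      _ ≤ 1 * (C * ‖y‖ ^ β) := by
          apply mul_le_mul (le_of_eq hφ1) (hdec y hy) (norm_nonneg _) zero_le_one
      _ = C * ‖y‖ ^ β := one_mul _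
  have := exterior_decay hn hR' husm huharm hC hβ hudec x hx
  calc ‖f x‖ = φ (f x) := hφ2.symm
    _ = u x := rfl
    _ ≤ |u x| := le_abs_self _
    _ ≤ (C * (2*R') ^ β * (2*R') ^ ((n:ℝ) - 2)) * ‖x‖ ^ (2 - (n:ℝ)) := this

lemma deriv_decay (hn : 3 ≤ n) : ∀ (j : ℕ),
    ∀ {F : Type*} [NormedAddCommGroup F] [NormedSpace ℝ F],
    ∀ {R' : ℝ}, 0 < R' → ∀ {g : EE → F},
    ContDiffOn ℝ (⊤ : ℕ∞) g {y : EE | R' < ‖y‖} →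
    (∀ y : EE, R' < ‖y‖ → lapF g y = 0) → ∀ {C δ : ℝ}, 0 ≤ C → δ < 0 →
    (∀ y : EE, R' < ‖y‖ → ‖g y‖ ≤ C * ‖y‖ ^ δ) →
    ∃ C' : ℝ, 0 ≤ C' ∧ ∃ S : ℝ, R' < S ∧ ∀ x : EE, S ≤ ‖x‖ →
      ‖iteratedFDeriv ℝ j g x‖ ≤ C' * ‖x‖ ^ (δ - (j:ℝ)) := by
  intro j
  induction j with
  | zero =>
      intro F _ _ R' hR' g hg hharm C δ hC hδ hdec
      refine ⟨C, hC, R' + 1, by linarith, fun x hx => ?_⟩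
      rw [norm_iteratedFDeriv_zero]
      have := hdec x (by linarith)
      simpa using this
  | succ j ih =>
      intro F _ _ R' hR' g hg hharm C δ hC hδ hdec
      set C₁ : ℝ := (2*(n:ℝ)+12) * (C * (2:ℝ) ^ (-δ)) * 4 with hC₁
      have hC₁0 : 0 ≤ C₁ := by positivity
      have hVopen : IsOpen {y : EE | R' < ‖y‖} := isOpen_lt continuous_const continuous_norm
      have hg' : ContDiffOn ℝ (⊤ : ℕ∞) (fderiv ℝ g) {y : EE | R' < ‖y‖} :=
        smooth_fderiv hVopen hg
      have hharm' : ∀ y : EE, R' < ‖y‖ → lapF (fderiv ℝ g) y = 0 := fun y hy =>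
        lapF_fderiv hVopen hg (fun z hz => hharm z hz) hy
      have hdec' : ∀ x : EE, 4*R' < ‖x‖ → ‖fderiv ℝ g x‖ ≤ C₁ * ‖x‖ ^ (δ - 1) := by
        intro x hx
        have hx0 : 0 < ‖x‖ := lt_trans (by positivity) hx
        have hρ : 0 < ‖x‖/4 := by positivity
        have hmem : ∀ y : EE, y ∈ Metric.closedBall x (‖x‖/4) → (3/4) * ‖x‖ ≤ ‖y‖ := by
          intro y hy
          have h1 : ‖x - y‖ ≤ ‖x‖/4 := by
            rw [← dist_eq_norm]
            rw [dist_comm]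
            exact Metric.mem_closedBall.mp hy
          have h2 := norm_sub_norm_le x y
          linarith
        have hball : Metric.closedBall x (‖x‖/4) ⊆ {y : EE | R' < ‖y‖} := by
          intro y hy
          have := hmem y hy
          show R' < ‖y‖
          nlinarith
        have hA : ∀ y ∈ Metric.closedBall x (‖x‖/4), ‖g y‖ ≤ C * (‖x‖/2) ^ δ := by
          intro y hy
          have hy1 := hmem y hy
          have hy2 : R' < ‖y‖ := hball hy
          calc ‖g y‖ ≤ C * ‖y‖ ^ δ := hdec y hy2
            _ ≤ C * (‖x‖/2) ^ δ := by
                apply mul_le_mul_of_nonneg_left _ hC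
                apply Real.rpow_le_rpow_of_nonpos (by positivity) (by linarith)
                  (le_of_lt hδ)
        have hgb := grad_bound (by omega) x hρ hVopen hball hg
          (fun z hz => hharm z hz) hA
        calc ‖fderiv ℝ g x‖ ≤ (2*(n:ℝ)+12) * (C * (‖x‖/2) ^ δ) / (‖x‖/4) := hgb
          _ = C₁ * ‖x‖ ^ (δ - 1) := by
              rw [hC₁]
              rw [Real.div_rpow (norm_nonneg x) (by norm_num : (0:ℝ) ≤ 2)]
              rw [Real.rpow_sub_one (ne_of_gt hx0)]
              rw [Real.rpow_neg (by norm_num : (0:ℝ) ≤ 2)]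
              have h2 : ((2:ℝ) ^ δ) ≠ 0 := ne_of_gt (Real.rpow_pos_of_pos (by norm_num) _)
              field_simp
      have h4R : (0:ℝ) < 4 * R' := by positivity
      have hsub : {y : EE | 4*R' < ‖y‖} ⊆ {y : EE | R' < ‖y‖} := by
        intro y hy
        have : 4*R' < ‖y‖ := hy
        show R' < ‖y‖
        linarith
      have hδ1 : δ - 1 < 0 := by linarith
      obtain ⟨C'', hC''0, S, hS, hbound⟩ := ih h4R (hg'.mono hsub)
        (fun y hy => hharm' y (hsub hy)) hC₁0 hδ1 (fun y hy => hdec' y hy)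
      refine ⟨C'', hC''0, S, by linarith, fun x hx => ?_⟩
      rw [← norm_iteratedFDeriv_fderiv]
      have hb := hbound x hx
      have hexp : δ - ((j+1 : ℕ):ℝ) = (δ - 1) - (j:ℝ) := by push_cast; ring
      rw [hexp]
      exact hb

end Bernstein
end HarmAux




/-- The Laplacian `Δf = ∑ i, ∂²f/∂xᵢ²` of a map `f : ℝⁿ → E`, computed via iterated
Fréchet derivatives in the coordinate directions. -/
noncomputable def vecLaplacian {n : ℕ} {E : Type*} [NormedAddCommGroup E] [NormedSpace ℝ E]
    (f : EuclideanSpace ℝ (Fin n) → E) (x : EuclideanSpace ℝ (Fin n)) : E :=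
  ∑ i : Fin n,
    fderiv ℝ (fun y => fderiv ℝ f y (EuclideanSpace.single i 1)) x (EuclideanSpace.single i 1)

/-- `f` is harmonic on the open set `U`: it is smooth on `U` and `Δf = 0` on `U`. -/
def IsHarmonicOn {n : ℕ} {E : Type*} [NormedAddCommGroup E] [NormedSpace ℝ E]
    (f : EuclideanSpace ℝ (Fin n) → E) (U : Set (EuclideanSpace ℝ (Fin n))) : Prop :=
  ContDiffOn ℝ (⊤ : ℕ∞) f U ∧ ∀ x ∈ U, vecLaplacian f x = 0

/-- `f = 𝒪_∞(r^α)` on `{|x| > R}`: for every `j ∈ ℕ` there are `C > 0` and `R₀ ≥ R` such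
that the `j`-th total derivative satisfies `‖D^j f(x)‖ ≤ C |x|^{α−j}` for all `|x| ≥ R₀`. -/
def BigOInfty {n : ℕ} {E : Type*} [NormedAddCommGroup E] [NormedSpace ℝ E]
    (f : EuclideanSpace ℝ (Fin n) → E) (R α : ℝ) : Prop :=
  ∀ j : ℕ, ∃ C > 0, ∃ R₀ ≥ R, ∀ x : EuclideanSpace ℝ (Fin n), R₀ ≤ ‖x‖ →
    ‖iteratedFDeriv ℝ j f x‖ ≤ C * ‖x‖ ^ (α - (j : ℝ))


lemma vecLaplacian_eq_lapF {n : ℕ} {E : Type*} [NormedAddCommGroup E] [NormedSpace ℝ E]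
    (f : EuclideanSpace ℝ (Fin n) → E) (x : EuclideanSpace ℝ (Fin n)) :
    vecLaplacian f x = HarmAux.lapF f x := rfl

/-- Let `n ≥ 3`, `R > 0`, `δ < 0`, let `E` be a finite-dimensional real normed vector
space, and let `ω : {x ∈ ℝⁿ : |x| > R} → E` be a smooth, componentwise harmonic map with
`ω = 𝒪_∞(r^δ)`. Then `ω = 𝒪_∞(r^{2−n})`. -/
theorem decaying_harmonic_map_decays_two_sub_n (n : ℕ) (hn : 3 ≤ n)
    (R : ℝ) (hR : 0 < R) (δ : ℝ) (hδ : δ < 0)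
    (E : Type*) [NormedAddCommGroup E] [NormedSpace ℝ E] [FiniteDimensional ℝ E]
    (ω : EuclideanSpace ℝ (Fin n) → E)
    (hharm : IsHarmonicOn ω {x | R < ‖x‖})
    (hO : BigOInfty ω R δ) :
    BigOInfty ω R (2 - (n : ℝ)) := by

  obtain ⟨hsm, hharm0⟩ := hharm
  intro j
  obtain ⟨C₀, hC₀pos, R₀, hR₀, hO0⟩ := hO 0
  set Rb : ℝ := max R₀ R with hRbdef
  have hRb : 0 < Rb := lt_of_lt_of_le hR (le_max_right _ _)
  have hRbR : R ≤ Rb := le_max_right _ _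
  have hsub1 : {y : EuclideanSpace ℝ (Fin n) | Rb < ‖y‖} ⊆ {y | R < ‖y‖} := by
    intro y hy
    exact lt_of_le_of_lt hRbR hy
  have hsm' : ContDiffOn ℝ (⊤ : ℕ∞) ω {y : EuclideanSpace ℝ (Fin n) | Rb < ‖y‖} :=
    hsm.mono hsub1
  have hharm' : ∀ y : EuclideanSpace ℝ (Fin n), Rb < ‖y‖ → HarmAux.lapF ω y = 0 := by
    intro y hy
    rw [← vecLaplacian_eq_lapF]
    exact hharm0 y (hsub1 hy)
  have hdec0 : ∀ y : EuclideanSpace ℝ (Fin n), Rb < ‖y‖ → ‖ω y‖ ≤ C₀ * ‖y‖ ^ δ := by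
    intro y hy
    have h1 : R₀ ≤ ‖y‖ := le_of_lt (lt_of_le_of_lt (le_max_left _ _) hy)
    have := hO0 y h1
    rw [norm_iteratedFDeriv_zero] at this
    simpa using this
  have hstep1 := HarmAux.exterior_decay_vec hn hRb hsm' hharm' (le_of_lt hC₀pos) hδ hdec0
  set C₀' : ℝ := C₀ * (2*Rb) ^ δ * (2*Rb) ^ ((n:ℝ) - 2) with hC₀'def
  have hC₀'0 : 0 ≤ C₀' := by positivity
  have h2Rb : (0:ℝ) < 2 * Rb := by positivity
  have hn3 : (3:ℝ) ≤ (n:ℝ) := by exact_mod_cast hn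
  have hδ2 : 2 - (n:ℝ) < 0 := by linarith
  have hsub2 : {y : EuclideanSpace ℝ (Fin n) | 2*Rb < ‖y‖} ⊆ {y | Rb < ‖y‖} := by
    intro y hy
    have : 2*Rb < ‖y‖ := hy
    show Rb < ‖y‖
    linarith
  have hdec1 : ∀ y : EuclideanSpace ℝ (Fin n), 2*Rb < ‖y‖ → ‖ω y‖ ≤ C₀' * ‖y‖ ^ (2 - (n:ℝ)) := by
    intro y hy
    exact hstep1 y (le_of_lt hy)
  obtain ⟨C', hC'0, S, hS, hbound⟩ := HarmAux.deriv_decay hn j h2Rb (hsm'.mono hsub2)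
    (fun y hy => hharm' y (hsub2 hy)) hC₀'0 hδ2 hdec1
  refine ⟨C' + 1, by linarith, max S R, le_max_right _ _, fun x hx => ?_⟩
  have hSx : S ≤ ‖x‖ := le_trans (le_max_left _ _) hx
  have hb := hbound x hSx
  have hrp : (0:ℝ) ≤ ‖x‖ ^ (2 - (n:ℝ) - (j:ℝ)) := Real.rpow_nonneg (norm_nonneg x) _
  calc ‖iteratedFDeriv ℝ j ω x‖ ≤ C' * ‖x‖ ^ (2 - (n:ℝ) - (j:ℝ)) := hb
    _ ≤ (C' + 1) * ‖x‖ ^ (2 - (n:ℝ) - (j:ℝ)) := by nlinarith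
end
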